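/- arXiv:2304.03049 — 7 statements merged into one kernel-verified Lean document; each statement's English description precedes it below -/
import Mathlib

section
/- Define coefficients c_k by the power series expansion x/(−ln(1−x)) = ∑_{k=0}^∞ c_k x^k, valid for |x| < 1 (with the value 1 at x = 0). Then c_0 = 1 and |c_k| ≤ 1 for every k ≥ 1. -/
open Finset

/-- `ga m = 1/(m+1)`, the Taylor coefficients of `(-log(1-x))/x`. -/
noncomputable def ga (m : ℕ) : ℝ := ((m : ℝ) + 1)⁻¹

lemma ga_pos (m : ℕ) : 0 < ga m := by
  unfold ga; positivity

lemma ga_zero : ga 0 = 1 := by norm_num [ga]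

lemma ga_le_one (m : ℕ) : ga m ≤ 1 := by
  unfold ga
  rw [inv_le_one_iff₀]
  right; linarith [Nat.cast_nonneg (α := ℝ) m]

/-- The (negated, shifted) Gregory coefficients, defined by the reciprocal recurrence. -/
noncomputable def greg : ℕ → ℝ
  | 0 => 1
  | (n+1) => -∑ j : Fin (n+1), greg j * ga (n+1-(j:ℕ))
  decreasing_by exact j.isLt

lemma greg_zero : greg 0 = 1 := by rw [greg]

lemma greg_succ (n : ℕ) :
    greg (n+1) = -∑ j ∈ range (n+1), greg j * ga (n+1-j) := by
  rw [greg, Fin.sum_univ_eq_sum_range (fun j => greg j * ga (n+1-j))]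

lemma greg_rec (n : ℕ) :
    ∑ j ∈ range (n+2), greg j * ga (n+1-j) = 0 := by
  rw [Finset.sum_range_succ]
  simp only [Nat.sub_self, ga_zero, mul_one]
  rw [greg_succ]
  ring
lemma ga_ratio {n k : ℕ} (hk : k ≤ n + 1) :
    ga (k+1) ≤ ga (n+2) / ga (n+1) * ga k := by
  have hkn : (k : ℝ) ≤ (n : ℝ) + 1 := by exact_mod_cast hk
  have h1 : (0:ℝ) < (k:ℝ) + 1 := by positivity
  have h2 : (0:ℝ) < (k:ℝ) + 2 := by positivity
  have h3 : (0:ℝ) < (n:ℝ) + 2 := by positivity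
  have h4 : (0:ℝ) < (n:ℝ) + 3 := by positivity
  unfold ga
  push_cast
  rw [div_eq_mul_inv, inv_inv]
  rw [show ((k:ℝ) + 1 + 1) = (k:ℝ) + 2 by ring, show ((n:ℝ) + 2 + 1) = (n:ℝ) + 3 by ring,
    show ((n:ℝ) + 1 + 1) = (n:ℝ) + 2 by ring]
  rw [inv_le_iff_one_le_mul₀ h2]
  have : ((n:ℝ)+3)⁻¹ * ((n:ℝ)+2) * ((k:ℝ)+1)⁻¹ * ((k:ℝ)+2)
      = (((n:ℝ)+2) * ((k:ℝ)+2)) / (((n:ℝ)+3) * ((k:ℝ)+1)) := by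
    field_simp
  rw [this, le_div_iff₀ (by positivity)]
  nlinarith

lemma greg_succ_nonpos (n : ℕ) : greg (n+1) ≤ 0 := by
  induction n using Nat.strong_induction_on with
  | _ n IH =>
    match n with
    | 0 =>
      norm_num [greg_succ, greg_zero, ga]
    | (n+1) =>
      -- greg (n+2) ≤ 0
      have h2 := greg_rec n
      set t : ℝ := ga (n+2) / ga (n+1) with ht
      have key : greg (n+2) = -∑ j ∈ range (n+2), greg j * (ga (n+2-j) - t * ga (n+1-j)) := by
        have expand : ∑ j ∈ range (n+2), greg j * (ga (n+2-j) - t * ga (n+1-j))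
            = ∑ j ∈ range (n+2), greg j * ga (n+2-j)
              - t * ∑ j ∈ range (n+2), greg j * ga (n+1-j) := by
          rw [Finset.mul_sum, ← Finset.sum_sub_distrib]
          exact Finset.sum_congr rfl (fun j _ => by ring)
        rw [expand, h2, mul_zero, sub_zero, greg_succ (n+1)]
      rw [key, neg_nonpos]
      apply Finset.sum_nonneg
      intro j hj
      rw [Finset.mem_range] at hj
      match j with
      | 0 =>
        have : ga (n+2) - t * ga (n+1) = 0 := by
          rw [ht, div_mul_cancel₀ _ (ne_of_gt (ga_pos (n+1)))]
          ring
        simp [this]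
      | (m+1) =>
        have hm : m ≤ n := by omega
        have hg : greg (m+1) ≤ 0 := IH m (by omega)
        have harith1 : n + 2 - (m+1) = (n - m) + 1 := by omega
        have harith2 : n + 1 - (m+1) = n - m := by omega
        have hfac : ga (n+2-(m+1)) - t * ga (n+1-(m+1)) ≤ 0 := by
          rw [harith1, harith2, sub_nonpos, ht]
          exact ga_ratio (by omega)
        nlinarith [mul_nonneg (neg_nonneg.2 hg) (neg_nonneg.2 hfac)]

lemma greg_succ_bound (n : ℕ) : |greg (n+1)| ≤ 1 := by
  rw [abs_le]
  constructor
  · rw [greg_succ, Finset.sum_range_succ']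
    have hsum : ∑ j ∈ range n, greg (j+1) * ga (n+1-(j+1)) ≤ 0 := by
      apply Finset.sum_nonpos
      intro j _
      exact mul_nonpos_of_nonpos_of_nonneg (greg_succ_nonpos j) (ga_pos _).le
    have h0 : greg 0 * ga (n+1-0) ≤ 1 := by
      rw [greg_zero, one_mul]
      exact ga_le_one _
    linarith
  · linarith [greg_succ_nonpos n]

lemma greg_bound (n : ℕ) : |greg n| ≤ 1 := by
  match n with
  | 0 => rw [greg_zero]; norm_num
  | (n+1) => exact greg_succ_bound n
/-- The function `(-log(1-x))/x`, extended by `1` at `0`. -/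
noncomputable def fG (x : ℝ) : ℝ := if x = 0 then 1 else (-Real.log (1 - x)) / x

lemma hasSum_ga {x : ℝ} (hx : |x| < 1) : HasSum (fun n : ℕ => ga n * x ^ n) (fG x) := by
  rcases eq_or_ne x 0 with rfl | hx0
  · have h : HasSum (fun n : ℕ => ga n * (0:ℝ) ^ n) (ga 0 * (0:ℝ) ^ 0) :=
      hasSum_single 0 (fun b hb => by
        match b with
        | 0 => exact absurd rfl hb
        | (m+1) => simp)
    simpa [fG, ga_zero] using h
  · have h := (Real.hasSum_pow_div_log_of_abs_lt_one hx).mul_left x⁻¹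
    have heq : (fun n : ℕ => x⁻¹ * (x ^ (n+1) / (n+1))) = fun n : ℕ => ga n * x ^ n := by
      funext n
      rw [pow_succ']
      unfold ga
      field_simp
    rw [heq] at h
    have : fG x = x⁻¹ * -Real.log (1 - x) := by
      rw [fG, if_neg hx0, div_eq_inv_mul]
    rwa [this]

lemma fG_pos {x : ℝ} (hx : |x| < 1) : 0 < fG x := by
  rcases eq_or_ne x 0 with rfl | hx0
  · simp [fG]
  · rw [fG, if_neg hx0]
    rw [abs_lt] at hx
    rcases lt_or_gt_of_ne hx0 with hneg | hpos
    · have hlog : 0 < Real.log (1 - x) := Real.log_pos (by linarith)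
      exact div_pos_of_neg_of_neg (by linarith) hneg
    · have hlog : Real.log (1 - x) < 0 :=
        Real.log_neg (by linarith) (by linarith)
      exact div_pos (by linarith) hpos

lemma hasSum_greg {x : ℝ} (hx : |x| < 1) :
    HasSum (fun k : ℕ => greg k * x ^ k)
      (if x = 0 then 1 else x / (-Real.log (1 - x))) := by
  have hxn : ∀ n : ℕ, |x| ^ n = ‖x ^ n‖ := fun n => by
    rw [norm_pow, Real.norm_eq_abs]
  have hgeom : Summable (fun n : ℕ => |x| ^ n) :=
    summable_geometric_of_lt_one (abs_nonneg x) hx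
  have hsum_d : Summable (fun n : ℕ => ‖greg n * x ^ n‖) := by
    apply Summable.of_nonneg_of_le (fun n => norm_nonneg _) _ hgeom
    intro n
    rw [norm_mul, Real.norm_eq_abs, Real.norm_eq_abs, abs_pow]
    calc |greg n| * |x| ^ n ≤ 1 * |x| ^ n := by
          exact mul_le_mul_of_nonneg_right (greg_bound n) (by positivity)
      _ = |x| ^ n := one_mul _
  have hsum_a : Summable (fun n : ℕ => ‖ga n * x ^ n‖) := by
    apply Summable.of_nonneg_of_le (fun n => norm_nonneg _) _ hgeom
    intro n
    rw [norm_mul, Real.norm_eq_abs, Real.norm_eq_abs, abs_pow]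
    have : |ga n| ≤ 1 := by
      rw [abs_of_pos (ga_pos n)]; exact ga_le_one n
    calc |ga n| * |x| ^ n ≤ 1 * |x| ^ n :=
          mul_le_mul_of_nonneg_right this (by positivity)
      _ = |x| ^ n := one_mul _
  have hD : HasSum (fun n : ℕ => greg n * x ^ n) (∑' n, greg n * x ^ n) :=
    hsum_d.of_norm.hasSum
  have hcauchy := hasSum_sum_range_mul_of_summable_norm hsum_d hsum_a
  have hGx : (∑' n, ga n * x ^ n) = fG x := (hasSum_ga hx).tsum_eq
  rw [hGx] at hcauchy
  -- The Cauchy product coefficients are `1, 0, 0, ...`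
  have hcoeff : (fun n : ℕ => ∑ k ∈ Finset.range (n+1),
      (greg k * x ^ k) * (ga (n-k) * x ^ (n-k))) = fun n : ℕ => if n = 0 then 1 else 0 := by
    funext n
    match n with
    | 0 => simp [greg_zero, ga_zero]
    | (n+1) =>
      have : ∑ k ∈ Finset.range (n+2), (greg k * x ^ k) * (ga (n+1-k) * x ^ (n+1-k))
          = (∑ k ∈ Finset.range (n+2), greg k * ga (n+1-k)) * x ^ (n+1) := by
        rw [Finset.sum_mul]
        apply Finset.sum_congr rfl
        intro k hk
        rw [Finset.mem_range] at hk
        have : x ^ k * x ^ (n+1-k) = x ^ (n+1) := by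
          rw [← pow_add]
          congr 1
          omega
        calc (greg k * x ^ k) * (ga (n+1-k) * x ^ (n+1-k))
            = greg k * ga (n+1-k) * (x ^ k * x ^ (n+1-k)) := by ring
          _ = greg k * ga (n+1-k) * x ^ (n+1) := by rw [this]
      rw [this, greg_rec n, zero_mul, if_neg (Nat.succ_ne_zero n)]
  rw [hcoeff] at hcauchy
  have hone : HasSum (fun n : ℕ => if n = 0 then (1:ℝ) else 0) 1 := by
    have h := hasSum_single (f := fun n : ℕ => if n = 0 then (1:ℝ) else 0) 0
      (fun b hb => if_neg hb)
    simpa using h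
  have hprod : (∑' n, greg n * x ^ n) * fG x = 1 := hcauchy.unique hone
  have hfG : fG x ≠ 0 := (fG_pos hx).ne'
  have hval : (∑' n, greg n * x ^ n) = if x = 0 then 1 else x / (-Real.log (1 - x)) := by
    have : (∑' n, greg n * x ^ n) = (fG x)⁻¹ := eq_inv_of_mul_eq_one_left hprod
    rw [this]
    rcases eq_or_ne x 0 with rfl | hx0
    · simp [fG]
    · rw [fG, if_neg hx0, if_neg hx0, inv_div]
  rwa [hval] at hD
/-- The function `x / (-log(1-x))`, extended by `1` at `0`. -/
noncomputable def fF (x : ℝ) : ℝ := if x = 0 then 1 else x / (-Real.log (1 - x))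

lemma hasFPowerSeriesOnBall_of_coeffs (b : ℕ → ℝ) (C : ℝ)
    (hb : ∀ n : ℕ, |b n| * (1/2 : ℝ) ^ n ≤ C)
    (hsum : ∀ x : ℝ, |x| < 1 → HasSum (fun k : ℕ => b k * x ^ k) (fF x)) :
    HasFPowerSeriesOnBall fF (FormalMultilinearSeries.ofScalars ℝ b) 0
      ((1/2 : NNReal) : ENNReal) := by
  constructor
  · apply FormalMultilinearSeries.le_radius_of_bound _ C
    intro n
    have : ‖FormalMultilinearSeries.ofScalars ℝ b n‖ = |b n| := by
      rw [FormalMultilinearSeries.ofScalars_norm, Real.norm_eq_abs]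
    rw [this]
    have : ((1/2 : NNReal) : ℝ) = (1/2 : ℝ) := by norm_num
    rw [this]
    exact hb n
  · norm_num
  · intro y hy
    have hy1 : |y| < 1 := by
      rw [EMetric.mem_ball, edist_zero_right, enorm_eq_nnnorm] at hy
      have : (‖y‖₊ : ENNReal) < ((1 : NNReal) : ENNReal) := by
        refine lt_trans hy ?_
        norm_num
      rw [ENNReal.coe_lt_coe] at this
      have := (NNReal.coe_lt_coe).2 this
      simpa [Real.norm_eq_abs] using this
    simp only [FormalMultilinearSeries.ofScalars_apply_eq, smul_eq_mul, zero_add]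
    exact hsum y hy1

/-- If `c_k` are the Taylor coefficients at `0` of `x ↦ x/(-ln(1-x))` (with value `1` at
`x = 0`), i.e. `∑ c_k x^k = x/(-ln(1-x))` for `|x| < 1`, then `c_0 = 1` and `|c_k| ≤ 1`
for every `k ≥ 1`. -/
theorem gregory_coefficients_bound (c : ℕ → ℝ)
    (hc : ∀ x : ℝ, |x| < 1 →
      HasSum (fun k : ℕ => c k * x ^ k)
        (if x = 0 then 1 else x / (-Real.log (1 - x)))) :
    c 0 = 1 ∧ ∀ k : ℕ, 1 ≤ k → |c k| ≤ 1 := by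
  have hc' : ∀ x : ℝ, |x| < 1 → HasSum (fun k : ℕ => c k * x ^ k) (fF x) := fun x hx => hc x hx
  -- a bound for the coefficients `c`
  have htend : Filter.Tendsto (fun n : ℕ => |c n * (1/2 : ℝ) ^ n|)
      Filter.atTop (nhds 0) := by
    have h := (hc' (1/2) (by rw [abs_of_pos]; norm_num; norm_num)).summable.tendsto_atTop_zero.abs
    simpa using h
  obtain ⟨C, hC⟩ := htend.bddAbove_range
  have hCb : ∀ n : ℕ, |c n| * (1/2 : ℝ) ^ n ≤ C := by
    intro n
    have hmem : |c n * (1/2 : ℝ) ^ n| ∈ Set.range (fun n : ℕ => |c n * (1/2 : ℝ) ^ n|) :=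
      ⟨n, rfl⟩
    have := hC hmem
    rwa [abs_mul, abs_pow, abs_of_pos (by norm_num : (0:ℝ) < 1/2)] at this
  have hp := hasFPowerSeriesOnBall_of_coeffs c C hCb hc'
  have hq := hasFPowerSeriesOnBall_of_coeffs greg 1
    (fun n => by
      calc |greg n| * (1/2 : ℝ) ^ n ≤ 1 * 1 ^ n := by
            apply mul_le_mul (greg_bound n) (by norm_num [pow_le_one₀]) (by positivity)
            norm_num
        _ = 1 := by norm_num)
    (fun x hx => hasSum_greg hx)
  have heq : FormalMultilinearSeries.ofScalars ℝ c = FormalMultilinearSeries.ofScalars ℝ greg :=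
    hp.hasFPowerSeriesAt.eq_formalMultilinearSeries hq.hasFPowerSeriesAt
  have hceq : c = greg := (FormalMultilinearSeries.ofScalars_series_eq_iff ℝ c greg).mp heq
  constructor
  · rw [hceq]; exact greg_zero
  · intro k hk
    rw [hceq]
    exact greg_bound k
end

section
/- For every integer l ≥ 0 there exists a constant C_l > 0 such that for every integer d ≥ 1 and every complex s with Re s ≥ 1 − ε_d/2, where ε_d = 1/(3·ln(ω(d)+2)), the l-th complex derivative of J_d satisfies |J_d^{(l)}(s)| ≤ C_l·(ω(d)+2)^{10}. -/
open Finset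

open Metric


lemma norm_exp_sub_one_le_aux (L : ℂ) :
    ‖Complex.exp L - 1‖ ≤ ‖L‖ * max 1 ‖Complex.exp L‖ := by
  have hder : ∀ τ : ℝ, τ ∈ Set.uIcc (0:ℝ) 1 →
      HasDerivAt (fun t : ℝ => Complex.exp ((t : ℂ) * L))
        (Complex.exp ((τ : ℂ) * L) * L) τ := by
    intro τ _
    have h1 : HasDerivAt (fun t : ℝ => (t : ℂ) * L) L τ := by
      simpa using (Complex.ofRealCLM.hasDerivAt (x := τ)).mul_const L
    simpa using h1.cexp
  have hcont : Continuous fun τ : ℝ => Complex.exp ((τ : ℂ) * L) * L := by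
    continuity
  have hint := intervalIntegral.integral_eq_sub_of_hasDerivAt hder
    (hcont.intervalIntegrable 0 1)
  have hbound : ∀ τ ∈ Set.uIoc (0:ℝ) 1,
      ‖Complex.exp ((τ : ℂ) * L) * L‖ ≤ max 1 ‖Complex.exp L‖ * ‖L‖ := by
    intro τ hτ
    rw [Set.uIoc_of_le (by norm_num : (0:ℝ) ≤ 1)] at hτ
    rw [norm_mul]
    gcongr
    have : ‖Complex.exp ((τ : ℂ) * L)‖ = Real.exp (τ * L.re) := by
      rw [Complex.norm_exp]
      norm_num
    rw [this]
    rcases le_or_gt L.re 0 with h | h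
    · exact le_max_of_le_left (Real.exp_le_one_iff.2 (mul_nonpos_of_nonneg_of_nonpos hτ.1.le h))
    · refine le_max_of_le_right ?_
      rw [Complex.norm_exp]
      exact Real.exp_le_exp.2 (by nlinarith [hτ.2, hτ.1.le])
  have := intervalIntegral.norm_integral_le_of_norm_le_const hbound
  rw [hint] at this
  simpa [mul_comm] using this


lemma cauchy_iterated : ∀ (l : ℕ) {f : ℂ → ℂ} {U : Set ℂ} {c : ℂ} {r M : ℝ},
    IsOpen U → DifferentiableOn ℂ f U → 0 < r → closedBall c r ⊆ U →
    (∀ y ∈ closedBall c r, ‖f y‖ ≤ M) →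
    ‖iteratedDeriv l f c‖ ≤ M * (l : ℝ) ^ l / r ^ l := by
  intro l
  induction l with
  | zero =>
    intro f U c r M _ _ hr _ hM
    simpa using hM c (mem_closedBall_self hr.le)
  | succ l ih =>
    intro f U c r M hU hf hr hsub hM
    have hM0 : 0 ≤ M := le_trans (norm_nonneg _) (hM c (mem_closedBall_self hr.le))
    -- one-step Cauchy bound for deriv f at any point y, circle of radius ρ
    have hstep : ∀ (ρ : ℝ), 0 < ρ → ∀ y : ℂ, closedBall y ρ ⊆ closedBall c r →
        ‖deriv f y‖ ≤ M / ρ := by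
      intro ρ hρ y hy
      refine Complex.norm_deriv_le_of_forall_mem_sphere_norm_le hρ ?_ ?_
      · refine DifferentiableOn.diffContOnCl ?_
        rw [closure_ball y hρ.ne']
        exact hf.mono (hy.trans hsub)
      · exact fun z hz => hM z (hy (sphere_subset_closedBall hz))
    rw [iteratedDeriv_succ']
    rcases Nat.eq_zero_or_pos l with rfl | hl
    · have := hstep r hr c (subset_refl _)
      simpa using this.trans_eq (by ring)
    -- l ≥ 1 : apply ih to deriv f on ball c r with radius r*l/(l+1)
    have hL1 : (1:ℝ) ≤ (l:ℝ) := by exact_mod_cast hl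
    set n : ℝ := (l:ℝ) + 1 with hn
    have hnpos : 0 < n := by positivity
    set ρ : ℝ := r / n with hρdef
    have hρ : 0 < ρ := by positivity
    set r' : ℝ := r - ρ with hr'
    have hr'pos : 0 < r' := by
      rw [hr', hρdef]
      have : r / n < r := by
        rw [div_lt_iff₀ hnpos]
        nlinarith
      linarith
    have hd' : DifferentiableOn ℂ (deriv f) (ball c r) :=
      (((hf.mono (ball_subset_closedBall.trans hsub)).analyticOnNhd
        isOpen_ball).deriv).differentiableOn
    have hsub' : closedBall c r' ⊆ ball c r := by
      apply closedBall_subset_ball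
      rw [hr']
      linarith
    have hM' : ∀ y ∈ closedBall c r', ‖deriv f y‖ ≤ M / ρ := by
      intro y hy
      refine hstep ρ hρ y ?_
      intro z hz
      have h1 : dist z y ≤ ρ := mem_closedBall.1 hz
      have h2 : dist y c ≤ r' := mem_closedBall.1 hy
      have := dist_triangle z y c
      exact mem_closedBall.2 (by rw [hr'] at h2; linarith)
    have := ih isOpen_ball hd' hr'pos hsub' hM'
    refine this.trans ?_
    -- (M/ρ) * l^l / r'^l ≤ M * (l+1)^(l+1) / r^(l+1)
    have hrr' : r' = r * (l:ℝ) / n := by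
      rw [hr', hρdef]; field_simp; ring
    rw [hrr', hρdef]
    apply le_of_eq
    have hc : ((l+1:ℕ):ℝ) = n := by push_cast [hn]; ring
    rw [hc]
    have h1 : (l:ℝ) ≠ 0 := by linarith
    have h2 : r ≠ 0 := hr.ne'
    have h3 : n ≠ 0 := hnpos.ne'
    field_simp
    have h4 : n ^ l * n⁻¹ ^ l = 1 := by rw [← mul_pow, mul_inv_cancel₀ h3, one_pow]
    linear_combination (-(M * n * (l:ℝ)^l * r * r^l)) * h4


lemma sum_enum {S : Finset ℕ} (hS : ∀ p ∈ S, 2 ≤ p) {f : ℕ → ℝ}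
    (hf : ∀ a b : ℕ, 2 ≤ a → a ≤ b → f b ≤ f a) :
    ∑ p ∈ S, f p ≤ ∑ i ∈ range S.card, f (i + 2) := by
  set n := S.card with hn
  have e := S.orderIsoOfFin hn.symm
  have hmono : StrictMono fun i : Fin n => ((e i : ℕ)) := fun i j hij => by
    exact_mod_cast e.strictMono hij
  have hkey : ∀ i : Fin n, (i : ℕ) + 2 ≤ (e i : ℕ) := by
    intro i
    obtain ⟨i, hi⟩ := i
    induction i with
    | zero => simpa using hS _ (e ⟨0, hi⟩).2
    | succ i ihi =>
      have hi' : i < n := by omega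
      have h1 : (e ⟨i, hi'⟩ : ℕ) < (e ⟨i+1, hi⟩ : ℕ) := hmono (by simp [Fin.lt_def])
      have := ihi hi'
      simp only [] at this ⊢
      omega
  have h1 : ∑ p ∈ S, f p = ∑ i : Fin n, f (e i : ℕ) := by
    rw [← Finset.sum_coe_sort S]
    exact (Fintype.sum_equiv e.toEquiv _ _ (fun i => rfl)).symm
  rw [h1, ← Fin.sum_univ_eq_sum_range (fun i => f (i + 2)) n]
  apply Finset.sum_le_sum
  intro i _
  exact hf _ _ (by omega) (hkey i)

lemma harmonic_le (n : ℕ) : ∑ i ∈ range n, (1:ℝ) / (i + 2) ≤ Real.log (n + 1) := by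
  have key : ∀ i : ℕ, (1:ℝ) / (i + 2) ≤ Real.log (i + 2) - Real.log (i + 1) := by
    intro i
    have h1 : (0:ℝ) < i + 1 := by positivity
    have h2 : (0:ℝ) < i + 2 := by positivity
    have := Real.log_le_sub_one_of_pos (show (0:ℝ) < (i+1)/(i+2) by positivity)
    rw [Real.log_div h1.ne' h2.ne'] at this
    have h3 : ((i:ℝ)+1)/((i:ℝ)+2) - 1 = -(1/((i:ℝ)+2)) := by
      field_simp
      ring
    rw [h3] at this
    linarith
  calc ∑ i ∈ range n, (1:ℝ) / (i + 2)
      ≤ ∑ i ∈ range n, (Real.log (i + 2) - Real.log (i + 1)) :=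
        Finset.sum_le_sum fun i _ => key i
    _ = Real.log (n + 1) - Real.log 1 := by
        have h := Finset.sum_range_sub (fun i : ℕ => Real.log (i + 1)) n
        have h2 : ∑ i ∈ range n, (Real.log ((i:ℝ) + 2) - Real.log ((i:ℝ) + 1))
            = ∑ i ∈ range n, (Real.log (((i+1 : ℕ):ℝ) + 1) - Real.log ((i:ℝ) + 1)) := by
          apply Finset.sum_congr rfl
          intro i _
          push_cast
          ring_nf
        rw [h2, h]
        norm_num
    _ ≤ Real.log (n + 1) := by simp

section Factor
variable {p : ℕ} (hp : 2 ≤ p) {y : ℂ} (hy : 0 < y.re)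

include hp in
lemma norm_w : ‖(p:ℂ)^y‖ = (p:ℝ) ^ y.re := by
  have hp0 : (0:ℝ) < p := by exact_mod_cast Nat.lt_of_lt_of_le Nat.zero_lt_two hp
  rw [show ((p:ℂ)) = ((p:ℝ):ℂ) by push_cast; rfl,
    Complex.norm_cpow_eq_rpow_re_of_pos hp0]

include hp hy in
lemma one_lt_norm_w : 1 < ‖(p:ℂ)^y‖ := by
  rw [norm_w hp]
  rw [Real.one_lt_rpow_iff_of_pos (by exact_mod_cast Nat.lt_of_lt_of_le Nat.zero_lt_two hp)]
  exact Or.inl ⟨by exact_mod_cast hp.trans_lt' one_lt_two, hy⟩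

include hp hy in
lemma w_facts :
    (p:ℂ)^y ≠ 0 ∧ (p:ℂ)^y - 1 ≠ 0 ∧ (p:ℂ)^y / ((p:ℂ)^y - 1) ≠ 0 ∧
      Complex.log ((p:ℂ)^y / ((p:ℂ)^y - 1)) ≠ 0 := by
  have h1 : 1 < ‖(p:ℂ)^y‖ := one_lt_norm_w hp hy
  have hw0 : (p:ℂ)^y ≠ 0 := by
    intro h; rw [h, norm_zero] at h1; linarith
  have hw1 : (p:ℂ)^y - 1 ≠ 0 := by
    intro h
    have h2 : (p:ℂ)^y = 1 := by linear_combination h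
    rw [h2, norm_one] at h1; linarith
  have hu0 : (p:ℂ)^y / ((p:ℂ)^y - 1) ≠ 0 := div_ne_zero hw0 hw1
  refine ⟨hw0, hw1, hu0, fun h => ?_⟩
  have h3 := Complex.exp_log hu0
  rw [h, Complex.exp_zero] at h3
  have h4 := congrArg (· * ((p:ℂ)^y - 1)) h3
  simp only [one_mul, div_mul_cancel₀ _ hw1] at h4
  have h5 : (0:ℂ) = -1 := by linear_combination -h4
  simp at h5

include hp hy in
lemma factor_le :
    ‖((p:ℂ)^y * Complex.log ((p:ℂ)^y / ((p:ℂ)^y - 1)))⁻¹‖ ≤ 1 + (p:ℝ) ^ (-y.re) := by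
  obtain ⟨hw0, hw1, hu0, hL0⟩ := w_facts hp hy
  set w := (p:ℂ)^y with hw
  set L := Complex.log (w / (w - 1)) with hL
  have hp0 : (0:ℝ) < p := by exact_mod_cast Nat.lt_of_lt_of_le Nat.zero_lt_two hp
  have hnw : ‖w‖ = (p:ℝ) ^ y.re := norm_w hp
  have h1w : 1 < ‖w‖ := one_lt_norm_w hp hy
  have ht : ‖w⁻¹‖ = (p:ℝ) ^ (-y.re) := by
    rw [norm_inv, hnw, ← Real.rpow_neg hp0.le]
  set t : ℝ := (p:ℝ) ^ (-y.re) with htdef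
  have htpos : 0 < t := Real.rpow_pos_of_pos hp0 _
  have ht1 : t < 1 := by
    rw [← ht, norm_inv]; exact inv_lt_one_of_one_lt₀ h1w
  have hexp : Complex.exp (-L) = 1 - w⁻¹ := by
    rw [hL, Complex.exp_neg, Complex.exp_log hu0]
    field_simp
  have hkey := norm_exp_sub_one_le_aux (-L)
  rw [hexp, show (1 - w⁻¹ - 1) = -w⁻¹ by ring, norm_neg, ht, norm_neg] at hkey
  have hmax : max 1 ‖1 - w⁻¹‖ ≤ 1 + t := by
    apply max_le (by linarith)
    calc ‖1 - w⁻¹‖ ≤ ‖(1:ℂ)‖ + ‖w⁻¹‖ := norm_sub_le _ _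
      _ = 1 + t := by rw [norm_one, ht]
  have hLpos : 0 < ‖L‖ := norm_pos_iff.2 hL0
  have hfinal : t ≤ ‖L‖ * (1 + t) := hkey.trans (mul_le_mul_of_nonneg_left hmax (norm_nonneg L))
  have ha : ((p:ℝ) ^ y.re)⁻¹ = t := by rw [← hnw, ← norm_inv, ht]
  rw [norm_inv, norm_mul, hnw, mul_inv, ha, ← div_eq_mul_inv, div_le_iff₀ hLpos]
  nlinarith [hfinal]

end Factor

/-- `J_d(s) = ∏_{p | d} (p^s log(p^s/(p^s-1)))⁻¹`, the product over the distinct prime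
divisors of `d`, with the principal branch of the complex logarithm. -/
noncomputable def Jfun (d : ℕ) (s : ℂ) : ℂ :=
  ∏ p ∈ d.primeFactors,
    ((p : ℂ) ^ s * Complex.log ((p : ℂ) ^ s / ((p : ℂ) ^ s - 1)))⁻¹

-- differentiability
lemma Jfun_diffOn (d : ℕ) : DifferentiableOn ℂ (Jfun d) {y : ℂ | 0 < y.re} := by
  have key : ∀ y ∈ {y : ℂ | 0 < y.re}, DifferentiableAt ℂ (Jfun d) y := by
    intro y hy
    have hy' : 0 < y.re := hy
    apply DifferentiableAt.fun_finsetProd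
    intro p hpmem
    have hp : 2 ≤ p := (Nat.prime_of_mem_primeFactors hpmem).two_le
    obtain ⟨hw0, hw1, hu0, hL0⟩ := w_facts hp hy'
    have hpc : (p:ℂ) ≠ 0 := Nat.cast_ne_zero.2 (by omega)
    have hwdiff : DifferentiableAt ℂ (fun s : ℂ => (p:ℂ)^s) y :=
      differentiableAt_id.const_cpow (Or.inl hpc)
    have hdivdiff : DifferentiableAt ℂ (fun s : ℂ => (p:ℂ)^s / ((p:ℂ)^s - 1)) y :=
      hwdiff.div (hwdiff.sub_const 1) hw1
    have hslit : (p:ℂ)^y / ((p:ℂ)^y - 1) ∈ Complex.slitPlane := by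
      rw [Complex.mem_slitPlane_iff]
      left
      set u := (p:ℂ)^y / ((p:ℂ)^y - 1) with hu
      have huinv : u⁻¹ = 1 - ((p:ℂ)^y)⁻¹ := by
        rw [hu]; field_simp
      have h1w : 1 < ‖(p:ℂ)^y‖ := one_lt_norm_w hp hy'
      have hrepos : 0 < (u⁻¹).re := by
        rw [huinv, Complex.sub_re, Complex.one_re]
        have h1 : (((p:ℂ)^y)⁻¹).re ≤ ‖((p:ℂ)^y)⁻¹‖ :=
          (le_abs_self _).trans (Complex.abs_re_le_norm _)
        have h2 : ‖((p:ℂ)^y)⁻¹‖ < 1 := by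
          rw [norm_inv]; exact inv_lt_one_of_one_lt₀ h1w
        linarith
      have : u = (u⁻¹)⁻¹ := by simp
      rw [this, Complex.inv_re]
      apply div_pos hrepos
      exact Complex.normSq_pos.2 (inv_ne_zero hu0)
    have hlogdiff : DifferentiableAt ℂ
        (fun s : ℂ => Complex.log ((p:ℂ)^s / ((p:ℂ)^s - 1))) y := hdivdiff.clog hslit
    exact (hwdiff.mul hlogdiff).inv (mul_ne_zero hw0 hL0)
  intro y hy
  exact (key y hy).differentiableWithinAt

-- sup bound
lemma Jfun_norm_le {d : ℕ} {y : ℂ}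
    (hy1 : 1 - 1 / (3 * Real.log ((d.primeFactors.card : ℝ) + 2)) ≤ y.re) :
    ‖Jfun d y‖ ≤ ((d.primeFactors.card : ℝ) + 2) ^ 2 := by
  set ω := d.primeFactors.card with hω
  set W : ℝ := (ω : ℝ) + 2 with hW
  have hWpos : (0:ℝ) < W := by positivity
  have hW2 : (2:ℝ) ≤ W := by rw [hW]; linarith [Nat.cast_nonneg (α := ℝ) ω]
  have hlog2 : (0.6931471803:ℝ) < Real.log 2 := Real.log_two_gt_d9
  have hlogW : (2/3 : ℝ) < Real.log W := by
    have := Real.log_le_log (by norm_num) hW2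
    linarith
  have hlogWpos : 0 < Real.log W := by linarith
  set ε : ℝ := 1 / (3 * Real.log W) with hε
  have hεpos : 0 < ε := by positivity
  have hεhalf : ε ≤ 1/2 := by
    rw [hε, div_le_div_iff₀ (by positivity) (by norm_num)]
    linarith
  have hyre : 1 - ε ≤ y.re := hy1
  have hypos : 0 < y.re := by linarith
  -- step 1 : product of norms
  have h1 : ‖Jfun d y‖ ≤ ∏ p ∈ d.primeFactors, (1 + (p:ℝ) ^ (-y.re)) := by
    rw [Jfun, norm_prod]
    apply Finset.prod_le_prod (fun p _ => norm_nonneg _)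
    intro p hpmem
    exact factor_le (Nat.prime_of_mem_primeFactors hpmem).two_le hypos
  -- step 2 : compare to exp of sum
  have h2 : ∏ p ∈ d.primeFactors, (1 + (p:ℝ) ^ (-y.re))
      ≤ Real.exp (∑ p ∈ d.primeFactors, (p:ℝ) ^ (-y.re)) := by
    rw [Real.exp_sum]
    apply Finset.prod_le_prod (fun p _ => by positivity)
    intro p _
    have := Real.add_one_le_exp ((p:ℝ) ^ (-y.re))
    linarith
  -- step 3 : bound the sum
  have h3 : ∑ p ∈ d.primeFactors, (p:ℝ) ^ (-y.re) ≤ 2 * Real.log W := by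
    have hstep : ∑ p ∈ d.primeFactors, (p:ℝ) ^ (-y.re)
        ≤ ∑ i ∈ range ω, ((i + 2 : ℕ):ℝ) ^ (-y.re) := by
      apply sum_enum (fun p hp => (Nat.prime_of_mem_primeFactors hp).two_le)
      intro a b ha hab
      have ha0 : (0:ℝ) < a := by exact_mod_cast Nat.lt_of_lt_of_le Nat.zero_lt_two ha
      have hb0 : (0:ℝ) < b := by have : (2:ℕ) ≤ b := ha.trans hab; exact_mod_cast Nat.lt_of_lt_of_le Nat.zero_lt_two this
      rw [Real.rpow_neg ha0.le, Real.rpow_neg hb0.le]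
      apply inv_anti₀ (Real.rpow_pos_of_pos ha0 _)
      exact Real.rpow_le_rpow ha0.le (by exact_mod_cast hab) hypos.le
    refine hstep.trans ?_
    have hterm : ∀ i ∈ range ω, ((i + 2 : ℕ):ℝ) ^ (-y.re) ≤ 2 * (1 / ((i:ℝ) + 2)) := by
      intro i hi
      have hi' : i < ω := Finset.mem_range.1 hi
      have hx : (1:ℝ) ≤ ((i:ℝ) + 2) := by linarith [Nat.cast_nonneg (α := ℝ) i]
      have hx0 : (0:ℝ) < ((i:ℝ) + 2) := by linarith
      push_cast
      calc ((i:ℝ) + 2) ^ (-y.re) ≤ ((i:ℝ) + 2) ^ (ε - 1) :=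
            Real.rpow_le_rpow_of_exponent_le hx (by linarith)
        _ = ((i:ℝ) + 2) ^ ε * ((i:ℝ) + 2)⁻¹ := by
            rw [Real.rpow_sub hx0, Real.rpow_one, div_eq_mul_inv]
        _ ≤ 2 * (1 / ((i:ℝ) + 2)) := by
            rw [one_div]
            apply mul_le_mul_of_nonneg_right _ (by positivity)
            rw [Real.rpow_def_of_pos hx0]
            have hlogle : Real.log ((i:ℝ) + 2) ≤ Real.log W := by
              apply Real.log_le_log hx0
              rw [hW]
              have : (i:ℝ) + 1 ≤ (ω:ℝ) := by exact_mod_cast hi'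
              linarith
            have hexp : Real.log ((i:ℝ) + 2) * ε ≤ 1/3 := by
              rw [hε]
              rw [mul_one_div, div_le_div_iff₀ (by positivity) (by norm_num)]
              nlinarith
            calc Real.exp (Real.log ((i:ℝ) + 2) * ε) ≤ Real.exp (1/3) :=
                  Real.exp_le_exp.2 hexp
              _ ≤ 2 := by
                  rw [show (2:ℝ) = Real.exp (Real.log 2) by rw [Real.exp_log]; norm_num]
                  apply Real.exp_le_exp.2
                  linarith
    calc ∑ i ∈ range ω, ((i + 2 : ℕ):ℝ) ^ (-y.re)
        ≤ ∑ i ∈ range ω, 2 * (1 / ((i:ℝ) + 2)) := Finset.sum_le_sum hterm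
      _ = 2 * ∑ i ∈ range ω, (1 / ((i:ℝ) + 2)) := by rw [Finset.mul_sum]
      _ ≤ 2 * Real.log ((ω:ℝ) + 1) := by
          have := harmonic_le ω
          linarith
      _ ≤ 2 * Real.log W := by
          have : Real.log ((ω:ℝ)+1) ≤ Real.log W := by
            apply Real.log_le_log (by positivity)
            rw [hW]; linarith
          linarith
  calc ‖Jfun d y‖ ≤ Real.exp (∑ p ∈ d.primeFactors, (p:ℝ) ^ (-y.re)) := h1.trans h2
    _ ≤ Real.exp (2 * Real.log W) := Real.exp_le_exp.2 h3
    _ = W ^ 2 := by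
        rw [two_mul, Real.exp_add, Real.exp_log hWpos, sq]

/-- For every `l ≥ 0` there is `C_l > 0` such that for all `d ≥ 1` and all `s` with
`Re s ≥ 1 - ε_d/2`, where `ε_d = 1/(3 ln(ω(d)+2))`, one has
`|J_d^{(l)}(s)| ≤ C_l (ω(d)+2)^{10}`. -/
theorem iteratedDeriv_Jfun_bound (l : ℕ) :
    ∃ C : ℝ, 0 < C ∧ ∀ d : ℕ, 1 ≤ d → ∀ s : ℂ,
      1 - (1 / (3 * Real.log ((d.primeFactors.card : ℝ) + 2))) / 2 ≤ s.re →
      ‖iteratedDeriv l (Jfun d) s‖ ≤ C * ((d.primeFactors.card : ℝ) + 2) ^ 10 := by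
  refine ⟨(l:ℝ)^l * 6^l * ((l:ℝ)+1)^l + 1, by positivity, ?_⟩
  intro d hd s hs
  set ω := d.primeFactors.card with hω
  set W : ℝ := (ω : ℝ) + 2 with hW
  have hWpos : (0:ℝ) < W := by positivity
  have hW2 : (2:ℝ) ≤ W := by rw [hW]; linarith [Nat.cast_nonneg (α := ℝ) ω]
  have hW1 : (1:ℝ) ≤ W := by linarith
  have hlog2 : (0.6931471803:ℝ) < Real.log 2 := Real.log_two_gt_d9
  have hlogW : (2/3 : ℝ) < Real.log W := by
    have := Real.log_le_log (by norm_num) hW2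
    linarith
  have hlogWpos : 0 < Real.log W := by linarith
  set r : ℝ := 1 / (6 * Real.log W) with hr
  have hrpos : 0 < r := by positivity
  have hrhalf : r ≤ 1/4 := by
    rw [hr, div_le_div_iff₀ (by positivity) (by norm_num)]
    linarith
  have hsre : 1 - r ≤ s.re := by
    have : (1 / (3 * Real.log W)) / 2 = r := by
      rw [hr]; ring
    rw [← this]; exact hs
  -- bound on the closed ball
  have hyre : ∀ y ∈ closedBall s r, 1 - 1 / (3 * Real.log W) ≤ y.re := by
    intro y hy
    have h1 : dist y s ≤ r := mem_closedBall.1 hy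
    have h2 : |(y - s).re| ≤ ‖y - s‖ := Complex.abs_re_le_norm _
    rw [Complex.dist_eq] at h1
    rw [Complex.sub_re] at h2
    have h3 : s.re - r ≤ y.re := by
      have := abs_le.1 (h2.trans h1)
      linarith [this.1]
    have h4 : (1:ℝ) / (3 * Real.log W) = 2 * r := by rw [hr]; ring
    rw [h4]
    linarith
  have hsub : closedBall s r ⊆ {y : ℂ | 0 < y.re} := by
    intro y hy
    have := hyre y hy
    have hε : 1 / (3 * Real.log W) ≤ 1/2 := by
      rw [div_le_div_iff₀ (by positivity) (by norm_num)]
      linarith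
    simp only [Set.mem_setOf_eq]
    linarith
  have hMb : ∀ y ∈ closedBall s r, ‖Jfun d y‖ ≤ W ^ 2 := by
    intro y hy
    exact Jfun_norm_le (hyre y hy)
  have hcauchy := cauchy_iterated l (isOpen_lt continuous_const Complex.continuous_re)
    (Jfun_diffOn d) hrpos hsub hMb
  refine hcauchy.trans ?_
  -- W^2 * l^l / r^l ≤ C * W^10
  have hrl : r ^ l = ((6 * Real.log W) ^ l)⁻¹ := by
    rw [hr, one_div, inv_pow]
  rw [hrl, div_inv_eq_mul]
  -- (log W)^l ≤ (l+1)^l * W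
  have hlogpow : (Real.log W) ^ l ≤ ((l:ℝ)+1)^l * W := by
    have hstep : Real.log W ≤ ((l:ℝ)+1) * W ^ ((1:ℝ)/((l:ℝ)+1)) := by
      have h1 : Real.log (W ^ ((1:ℝ)/((l:ℝ)+1))) = (1/((l:ℝ)+1)) * Real.log W :=
        Real.log_rpow hWpos _
      have h2 : Real.log (W ^ ((1:ℝ)/((l:ℝ)+1))) ≤ W ^ ((1:ℝ)/((l:ℝ)+1)) := by
        have h3 := Real.log_le_sub_one_of_pos (Real.rpow_pos_of_pos hWpos ((1:ℝ)/((l:ℝ)+1)))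
        linarith [Real.rpow_pos_of_pos hWpos ((1:ℝ)/((l:ℝ)+1))]
      have hl1 : (0:ℝ) < (l:ℝ)+1 := by positivity
      calc Real.log W = ((l:ℝ)+1) * Real.log (W ^ ((1:ℝ)/((l:ℝ)+1))) := by
            rw [h1]; field_simp
        _ ≤ ((l:ℝ)+1) * W ^ ((1:ℝ)/((l:ℝ)+1)) := by
            apply mul_le_mul_of_nonneg_left h2 hl1.le
    calc (Real.log W) ^ l ≤ (((l:ℝ)+1) * W ^ ((1:ℝ)/((l:ℝ)+1))) ^ l := by
          apply pow_le_pow_left₀ hlogWpos.le hstep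
      _ = ((l:ℝ)+1)^l * (W ^ ((1:ℝ)/((l:ℝ)+1)))^l := mul_pow _ _ _
      _ ≤ ((l:ℝ)+1)^l * W := by
          apply mul_le_mul_of_nonneg_left _ (by positivity)
          rw [← Real.rpow_natCast (W ^ ((1:ℝ)/((l:ℝ)+1))) l, ← Real.rpow_mul hWpos.le]
          calc W ^ ((1:ℝ)/((l:ℝ)+1) * l) ≤ W ^ (1:ℝ) := by
                apply Real.rpow_le_rpow_of_exponent_le hW1
                rw [div_mul_eq_mul_div, div_le_one (by positivity)]
                linarith
            _ = W := Real.rpow_one W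
  have hW310 : W ^ 3 ≤ W ^ 10 := pow_le_pow_right₀ hW1 (by norm_num)
  calc W ^ 2 * (l:ℝ) ^ l * (6 * Real.log W) ^ l
      = W ^ 2 * (l:ℝ) ^ l * 6 ^ l * (Real.log W) ^ l := by rw [mul_pow]; ring
    _ ≤ W ^ 2 * (l:ℝ) ^ l * 6 ^ l * (((l:ℝ)+1)^l * W) := by
        apply mul_le_mul_of_nonneg_left hlogpow (by positivity)
    _ = ((l:ℝ)^l * 6^l * ((l:ℝ)+1)^l) * W ^ 3 := by ring
    _ ≤ ((l:ℝ)^l * 6^l * ((l:ℝ)+1)^l) * W ^ 10 := by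
        apply mul_le_mul_of_nonneg_left hW310 (by positivity)
    _ ≤ ((l:ℝ)^l * 6^l * ((l:ℝ)+1)^l + 1) * W ^ 10 := by
        apply mul_le_mul_of_nonneg_right _ (by positivity)
        linarith
end

section
/- For every fixed integer m ≥ 0 there exists a constant C_m > 0 such that for every prime p, the m-th derivative at s = 1 of the function f(s;p) = ln p/((p^s − 1)·ln(p^s/(p^s−1))) − ln p satisfies |f^{(m)}(1;p)| ≤ C_m·(ln p)^{m+1}/p. -/
open Metric Complex Nat

/-- `f(s;p) = ln p/((p^s - 1) log(p^s/(p^s-1))) - ln p`, with the principal branch of the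
complex logarithm. -/
noncomputable def fsp (p : ℕ) (s : ℂ) : ℂ :=
  (Real.log p : ℂ) / (((p : ℂ) ^ s - 1) * Complex.log ((p : ℂ) ^ s / ((p : ℂ) ^ s - 1))) -
    (Real.log p : ℂ)

lemma fsp_key {p : ℕ} (hp : 20 ≤ p) {s : ℂ} (hs : s ∈ closedBall 1 (Real.log p)⁻¹) :
    DifferentiableAt ℂ (fsp p) s ∧ ‖fsp p s‖ ≤ 12 * Real.log p / p := by
  have hp1 : (1 : ℝ) < p := by exact_mod_cast lt_of_lt_of_le (by norm_num) hp
  have hp0 : (0 : ℝ) < p := by linarith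
  have hL : 0 < Real.log p := Real.log_pos hp1
  set L : ℝ := Real.log p with hLdef
  have hre : 1 - L⁻¹ ≤ s.re := by
    have h1 : dist s 1 ≤ L⁻¹ := mem_closedBall.mp hs
    rw [Complex.dist_eq] at h1
    have h2 : |(s - 1).re| ≤ ‖s - 1‖ := Complex.abs_re_le_norm _
    have h3 : (s - 1).re = s.re - 1 := by simp
    rw [h3] at h2
    have := abs_le.mp (le_trans h2 h1)
    linarith [this.1]
  set y : ℂ := (p : ℂ) ^ s with hydef
  have hynorm : ‖y‖ = (p : ℝ) ^ s.re := by
    rw [hydef]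
    rw [show ((p : ℕ) : ℂ) = (((p : ℝ)) : ℂ) by push_cast; ring]
    exact Complex.norm_cpow_eq_rpow_re_of_pos hp0 s
  have hexp : (p : ℝ) ^ (1 - L⁻¹ : ℝ) = p / Real.exp 1 := by
    rw [Real.rpow_def_of_pos hp0]
    rw [show L * (1 - L⁻¹) = L - 1 by field_simp]
    rw [Real.exp_sub, Real.exp_log hp0]
  have hylb : (p : ℝ) / Real.exp 1 ≤ ‖y‖ := by
    rw [hynorm, ← hexp]
    exact (Real.rpow_le_rpow_left_iff hp1).mpr hre
  have he3 : Real.exp 1 < 3 := lt_trans Real.exp_one_lt_d9 (by norm_num)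
  have he1 : 1 < Real.exp 1 := by
    have := Real.exp_one_gt_d9; linarith
  have h20 : (20 : ℝ) ≤ p := by exact_mod_cast hp
  have hy6 : (6 : ℝ) < ‖y‖ := by
    have : (6 : ℝ) < (p : ℝ) / Real.exp 1 := by
      rw [lt_div_iff₀ (by linarith)]
      nlinarith
    linarith
  have hy0 : y ≠ 0 := by
    intro h; rw [h] at hy6; norm_num at hy6
  have hy1 : y ≠ 1 := by
    intro h; rw [h] at hy6; norm_num at hy6
  have hy1' : y - 1 ≠ 0 := sub_ne_zero.mpr hy1
  set x : ℂ := y⁻¹ with hxdef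
  have hxnorm : ‖x‖ = ‖y‖⁻¹ := by rw [hxdef, norm_inv]
  have ha0 : 0 < ‖x‖ := by rw [hxnorm]; positivity
  have hane : ‖x‖ ≠ 0 := ne_of_gt ha0
  have hap : ‖x‖ ≤ 3 / p := by
    rw [hxnorm]
    rw [inv_le_comm₀ (by linarith) (by positivity)]
    calc ((3:ℝ) / p)⁻¹ = (p : ℝ) / 3 := by rw [inv_div]
      _ ≤ (p : ℝ) / Real.exp 1 := by
          apply div_le_div_of_nonneg_left (by linarith) (by linarith) he3.le
      _ ≤ ‖y‖ := hylb
  have ha4 : ‖x‖ ≤ 1 / 4 := by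
    calc ‖x‖ ≤ 3 / p := hap
      _ ≤ 3 / 20 := by apply div_le_div_of_nonneg_left (by norm_num) (by norm_num) h20
      _ ≤ 1 / 4 := by norm_num
  have h1xlb : 1 - ‖x‖ ≤ ‖(1:ℂ) - x‖ := by
    calc 1 - ‖x‖ = ‖(1:ℂ)‖ - ‖x‖ := by simp
      _ ≤ ‖(1:ℂ) - x‖ := norm_sub_norm_le _ _
  have h1x : (1 : ℂ) - x ≠ 0 := by
    intro h
    have : ‖(1 : ℂ) - x‖ = 0 := by rw [h]; simp
    linarith
  have h1xre : (3:ℝ)/4 ≤ (1 - x).re := by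
    have h4 : (1 - x).re = 1 - x.re := by simp
    rw [h4]
    have h5 : x.re ≤ |x.re| := le_abs_self _
    have h6 : |x.re| ≤ ‖x‖ := by exact Complex.abs_re_le_norm _
    linarith
  have hfrac : y / (y - 1) = (1 - x)⁻¹ := by
    rw [hxdef]
    field_simp
  have hslit : y / (y - 1) ∈ Complex.slitPlane := by
    rw [hfrac, Complex.mem_slitPlane_iff]
    left
    rw [Complex.inv_re]
    have hnsq : 0 < Complex.normSq (1 - x) := by
      rw [Complex.normSq_pos]; exact h1x
    positivity
  have hlog : Complex.log (y / (y - 1)) = -Complex.log (1 - x) := by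
    rw [hfrac]
    apply Complex.log_inv
    apply Complex.slitPlane_arg_ne_pi
    rw [Complex.mem_slitPlane_iff]
    left; linarith
  set E : ℂ := Complex.log (1 - x) + x with hEdef
  have hE : ‖E‖ ≤ 2 / 3 * ‖x‖ ^ 2 := by
    have hxlt : ‖-x‖ < 1 := by rw [norm_neg]; linarith
    have hb := Complex.norm_log_one_add_sub_self_le hxlt
    rw [show (1 : ℂ) + -x = 1 - x by ring] at hb
    rw [show Complex.log (1 - x) - -x = E by rw [hEdef]; ring] at hb
    rw [norm_neg] at hb
    calc ‖E‖ ≤ ‖x‖ ^ 2 * (1 - ‖x‖)⁻¹ / 2 := hb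
      _ ≤ 2 / 3 * ‖x‖ ^ 2 := by
          have h7 : (1 - ‖x‖)⁻¹ ≤ 4/3 := by
            rw [inv_le_comm₀ (by linarith) (by norm_num)]
            linarith
          nlinarith
  have hxy : (y - 1) * x = 1 - x := by
    rw [hxdef]; field_simp
  have hlx : Complex.log (1 - x) = E - x := by rw [hEdef]; ring
  have hD : (y - 1) * Complex.log (y / (y - 1)) = (1 - x) - (y - 1) * E := by
    rw [hlog, hlx]
    rw [show (y - 1) * -(E - x) = (y - 1) * x - (y - 1) * E by ring, hxy]
  have hy1x : ‖y - 1‖ * ‖x‖ ≤ 1 + ‖x‖ := by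
    have h8 : ‖y - 1‖ ≤ ‖y‖ + 1 := by
      calc ‖y - 1‖ ≤ ‖y‖ + ‖(1:ℂ)‖ := norm_sub_le _ _
        _ = ‖y‖ + 1 := by simp
    have hya : ‖y‖ = ‖x‖⁻¹ := by rw [hxnorm, inv_inv]
    rw [hya] at h8
    calc ‖y - 1‖ * ‖x‖ ≤ (‖x‖⁻¹ + 1) * ‖x‖ :=
          mul_le_mul_of_nonneg_right h8 (norm_nonneg x)
      _ = 1 + ‖x‖ := by rw [add_mul, inv_mul_cancel₀ hane, one_mul]
  have hyE : ‖(y - 1) * E‖ ≤ 5 / 6 * ‖x‖ := by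
    rw [norm_mul]
    have c1 : ‖y - 1‖ * ‖E‖ ≤ ‖y - 1‖ * (2 / 3 * ‖x‖ ^ 2) :=
      mul_le_mul_of_nonneg_left hE (norm_nonneg _)
    have c2 : ‖y - 1‖ * (2 / 3 * ‖x‖ ^ 2) = 2 / 3 * ‖x‖ * (‖y - 1‖ * ‖x‖) := by ring
    have c3 : 2 / 3 * ‖x‖ * (‖y - 1‖ * ‖x‖) ≤ 2 / 3 * ‖x‖ * (1 + ‖x‖) :=
      mul_le_mul_of_nonneg_left hy1x (by positivity)
    have c4 : 2 / 3 * ‖x‖ * (1 + ‖x‖) ≤ 5 / 6 * ‖x‖ := by nlinarith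
    linarith
  set D : ℂ := (y - 1) * Complex.log (y / (y - 1)) with hDdef
  have h1mD : ‖1 - D‖ ≤ 2 * ‖x‖ := by
    rw [hD]
    rw [show (1 : ℂ) - ((1 - x) - (y - 1) * E) = x + (y - 1) * E by ring]
    calc ‖x + (y - 1) * E‖ ≤ ‖x‖ + ‖(y - 1) * E‖ := norm_add_le _ _
      _ ≤ ‖x‖ + 5 / 6 * ‖x‖ := by linarith
      _ ≤ 2 * ‖x‖ := by linarith
  have hDlb : (1 : ℝ) / 2 ≤ ‖D‖ := by
    rw [hD]
    calc (1:ℝ)/2 ≤ (1 - ‖x‖) - 5/6 * ‖x‖ := by linarith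
      _ ≤ ‖(1:ℂ) - x‖ - ‖(y - 1) * E‖ := by linarith
      _ ≤ ‖(1 - x) - (y - 1) * E‖ := norm_sub_norm_le _ _
  have hD0 : D ≠ 0 := by
    intro h
    rw [h] at hDlb; norm_num at hDlb
  have hdiff : DifferentiableAt ℂ (fsp p) s := by
    have hpc0 : (p : ℂ) ≠ 0 := by
      simp only [ne_eq, Nat.cast_eq_zero]; omega
    have h1 : DifferentiableAt ℂ (fun z : ℂ => (p : ℂ) ^ z) s :=
      differentiableAt_id.const_cpow (Or.inl hpc0)
    have h2 : DifferentiableAt ℂ (fun z : ℂ => (p : ℂ) ^ z - 1) s := h1.sub_const 1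
    have h3 : DifferentiableAt ℂ (fun z : ℂ => (p : ℂ) ^ z / ((p : ℂ) ^ z - 1)) s :=
      h1.div h2 hy1'
    have h4 : DifferentiableAt ℂ (fun z : ℂ =>
        Complex.log ((p : ℂ) ^ z / ((p : ℂ) ^ z - 1))) s := h3.clog hslit
    have h5 : DifferentiableAt ℂ (fun z : ℂ =>
        ((p : ℂ) ^ z - 1) * Complex.log ((p : ℂ) ^ z / ((p : ℂ) ^ z - 1))) s := h2.mul h4
    have h6 : DifferentiableAt ℂ (fun z : ℂ => (Real.log p : ℂ) /
        (((p : ℂ) ^ z - 1) * Complex.log ((p : ℂ) ^ z / ((p : ℂ) ^ z - 1)))) s :=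
      (differentiableAt_const _).div h5 hD0
    exact h6.sub_const _
  refine ⟨hdiff, ?_⟩
  have hval : fsp p s = (L : ℂ) * (1 - D) / D := by
    rw [fsp, ← hydef, ← hDdef, ← hLdef]
    field_simp
  rw [hval, norm_div, norm_mul]
  have hLnorm : ‖(L : ℂ)‖ = L := by
    rw [Complex.norm_real, Real.norm_eq_abs, abs_of_pos hL]
  rw [hLnorm]
  calc L * ‖1 - D‖ / ‖D‖ ≤ L * (2 * ‖x‖) / (1 / 2) := by
        gcongr
      _ = 4 * L * ‖x‖ := by ring
      _ ≤ 4 * L * (3 / p) := by gcongr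
      _ = 12 * L / p := by ring



lemma cauchy_iteratedDeriv_bound {f : ℂ → ℂ} {c : ℂ} {R M : ℝ} (hR : 0 < R)
    (hd : DifferentiableOn ℂ f (closedBall c R))
    (hM : ∀ z ∈ closedBall c R, ‖f z‖ ≤ M) (m : ℕ) :
    ‖iteratedDeriv m f c‖ ≤ (m ! : ℝ) * M / R ^ m := by
  lift R to NNReal using hR.le with R' hR'
  have hR0 : (0 : NNReal) < R' := by exact_mod_cast hR
  have h := hd.hasFPowerSeriesOnBall hR0
  have hfact := h.factorial_smul (1 : ℂ) m
  have hiter : iteratedDeriv m f c = iteratedFDeriv ℂ m f c fun _ => (1 : ℂ) := by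
    rw [iteratedDeriv_eq_iteratedFDeriv]
  rw [hiter, ← hfact]
  have hM0 : 0 ≤ M := le_trans (norm_nonneg _) (hM c (mem_closedBall_self hR.le))
  have hcont : ContinuousOn (fun θ : ℝ => ‖f (circleMap c R' θ)‖) (Set.Icc 0 (2 * Real.pi)) := by
    apply (hd.continuousOn.comp (continuous_circleMap c R').continuousOn ?_).norm
    intro θ _
    exact sphere_subset_closedBall (circleMap_mem_sphere c (by exact_mod_cast hR.le) θ)
  have hint : (∫ θ : ℝ in (0)..(2 * Real.pi), ‖f (circleMap c R' θ)‖) ≤ 2 * Real.pi * M := by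
    have : (∫ θ : ℝ in (0)..(2 * Real.pi), ‖f (circleMap c R' θ)‖)
        ≤ ∫ _θ : ℝ in (0)..(2 * Real.pi), M := by
      apply intervalIntegral.integral_mono_on Real.two_pi_pos.le
        (hcont.intervalIntegrable_of_Icc Real.two_pi_pos.le) (intervalIntegrable_const)
      intro θ _
      exact hM _ (sphere_subset_closedBall (circleMap_mem_sphere c (by exact_mod_cast hR.le) θ))
    simpa using this
  have hnorm := norm_cauchyPowerSeries_le f c R' m
  calc ‖m ! • (cauchyPowerSeries f c R' m) fun _ => (1:ℂ)‖
      = (m ! : ℝ) * ‖(cauchyPowerSeries f c R' m) fun _ => (1:ℂ)‖ := by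
        rw [← Nat.cast_smul_eq_nsmul ℝ, norm_smul]; simp
    _ ≤ m ! * ‖cauchyPowerSeries f c R' m‖ := by
        gcongr
        refine le_trans ((cauchyPowerSeries f c R' m).le_opNorm _) ?_
        simp
    _ ≤ (m ! : ℝ) * (((2 * Real.pi)⁻¹ * ∫ θ : ℝ in (0)..(2 * Real.pi), ‖f (circleMap c R' θ)‖)
          * |(R' : ℝ)|⁻¹ ^ m) := by gcongr
    _ ≤ (m ! : ℝ) * (((2 * Real.pi)⁻¹ * (2 * Real.pi * M)) * |(R' : ℝ)|⁻¹ ^ m) := by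
        gcongr
    _ = (m ! : ℝ) * M / (R' : ℝ) ^ m := by
        rw [_root_.abs_of_nonneg (by exact_mod_cast hR.le : (0:ℝ) ≤ (R':ℝ))]
        field_simp
        rw [one_div_pow, mul_assoc, one_div_mul_cancel (pow_ne_zero _ (ne_of_gt hR)), mul_one]

lemma fsp_big {p : ℕ} (hp : 20 ≤ p) (m : ℕ) :
    ‖iteratedDeriv m (fsp p) 1‖ ≤ (12 * (m ! : ℝ)) * Real.log p ^ (m + 1) / p := by
  have hp1 : (1 : ℝ) < p := by exact_mod_cast lt_of_lt_of_le (by norm_num) hp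
  have hp0 : (0 : ℝ) < p := by linarith
  have hL : 0 < Real.log p := Real.log_pos hp1
  have hR : 0 < (Real.log p)⁻¹ := inv_pos.mpr hL
  have h := cauchy_iteratedDeriv_bound hR
    (fun z hz => (fsp_key hp hz).1.differentiableWithinAt)
    (fun z hz => (fsp_key hp hz).2) m
  refine h.trans (le_of_eq ?_)
  rw [inv_pow, div_inv_eq_mul]
  field_simp
  ring

/-- For every `m ≥ 0` there is `C_m > 0` such that for every prime `p`,
`|f^{(m)}(1;p)| ≤ C_m (ln p)^{m+1}/p`. -/
theorem iteratedDeriv_fsp_bound (m : ℕ) :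
    ∃ C : ℝ, 0 < C ∧ ∀ p : ℕ, p.Prime →
      ‖iteratedDeriv m (fsp p) 1‖ ≤ C * Real.log p ^ (m + 1) / p := by
  set C : ℝ := 12 * (m ! : ℝ) +
    ∑ p ∈ Finset.range 20, ‖iteratedDeriv m (fsp p) 1‖ * p / Real.log p ^ (m + 1) with hCdef
  have hterm : ∀ p : ℕ, 0 ≤ ‖iteratedDeriv m (fsp p) 1‖ * p / Real.log p ^ (m + 1) :=
    fun p => div_nonneg (mul_nonneg (norm_nonneg _) (Nat.cast_nonneg _))
      (pow_nonneg (Real.log_natCast_nonneg _) _)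
  have hsum : 0 ≤ ∑ p ∈ Finset.range 20,
      ‖iteratedDeriv m (fsp p) 1‖ * p / Real.log p ^ (m + 1) :=
    Finset.sum_nonneg fun p _ => hterm p
  have hfac : (0 : ℝ) < 12 * (m ! : ℝ) := by positivity
  refine ⟨C, by rw [hCdef]; linarith, fun p hp => ?_⟩
  have hp1 : (1 : ℝ) < p := by exact_mod_cast hp.one_lt
  have hp0 : (0 : ℝ) < p := by linarith
  have hL : 0 < Real.log p := Real.log_pos hp1
  by_cases hcase : 20 ≤ p
  · have h := fsp_big hcase m
    refine h.trans ?_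
    gcongr
    rw [hCdef]
    linarith
  · push_neg at hcase
    have hmem : p ∈ Finset.range 20 := Finset.mem_range.mpr hcase
    have htle : ‖iteratedDeriv m (fsp p) 1‖ * p / Real.log p ^ (m + 1) ≤ C := by
      rw [hCdef]
      have := Finset.single_le_sum (f := fun q : ℕ =>
        ‖iteratedDeriv m (fsp q) 1‖ * q / Real.log q ^ (m + 1))
        (fun q _ => hterm q) hmem
      linarith
    have heq : ‖iteratedDeriv m (fsp p) 1‖ =
        (‖iteratedDeriv m (fsp p) 1‖ * p / Real.log p ^ (m + 1)) *
          Real.log p ^ (m + 1) / p := by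
      field_simp
    rw [heq]
    gcongr
end

section
/- Let p be a prime and d a squarefree positive integer with gcd(d, p) = 1 and gcd(dp, a) = 1. Then ρ_{dp} = −ρ_d + (μ(d)h(d)/(H_a(z)·g(d)))·∑_{z/(dp) < k ≤ z/d, gcd(k, dpa) = 1} μ(k)²h(k). -/
open Finset

/-- `P_a(z) = ∏_{p ≤ z, p ∤ a} p`, the product over primes up to `z` not dividing `a`. -/
noncomputable def Pa (z : ℝ) (a : ℕ) : ℕ :=
  ∏ p ∈ (Finset.range (⌊z⌋₊ + 1)).filter (fun p => p.Prime ∧ ¬p ∣ a), p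

/-- `H_a(z) = ∑_{k ≤ z, (k,a)=1} μ(k)² h(k)`. -/
noncomputable def Ha (z : ℝ) (a : ℕ) (h : ℕ → ℝ) : ℝ :=
  ∑ k ∈ (Finset.Icc 1 ⌊z⌋₊).filter (fun k => Nat.gcd k a = 1),
    (ArithmeticFunction.moebius k : ℝ) ^ 2 * h k

/-- The Selberg sieve coefficients
`ρ_d = (μ(d)h(d)/(H_a(z) g(d))) ∑_{k ≤ z/d, kd | P_a(z)} μ(k)² h(k)`. -/
noncomputable def rhoCoeff (z : ℝ) (a : ℕ) (g h : ℕ → ℝ) (d : ℕ) : ℝ :=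
  ((ArithmeticFunction.moebius d : ℝ) * h d / (Ha z a h * g d)) *
    ∑ k ∈ (Finset.Icc 1 ⌊z / (d : ℝ)⌋₊).filter (fun k => k * d ∣ Pa z a),
      (ArithmeticFunction.moebius k : ℝ) ^ 2 * h k

lemma sq_prod (s : Finset ℕ) (hs : ∀ q ∈ s, Nat.Prime q) : Squarefree (∏ q ∈ s, q) := by
  induction s using Finset.induction with
  | empty => simpa using squarefree_one
  | @insert q s hq ih =>
    rw [Finset.prod_insert hq]
    have hqp : q.Prime := hs q (Finset.mem_insert_self q s)
    have hcop : Nat.Coprime q (∏ r ∈ s, r) := by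
      apply Nat.Coprime.prod_right
      intro r hr
      exact (Nat.coprime_primes hqp (hs r (Finset.mem_insert_of_mem hr))).mpr
        (fun e => hq (e ▸ hr))
    exact (Nat.squarefree_mul hcop).mpr ⟨hqp.squarefree, ih (fun r hr => hs r (Finset.mem_insert_of_mem hr))⟩

lemma Pa_squarefree (z : ℝ) (a : ℕ) : Squarefree (Pa z a) :=
  sq_prod _ (fun q hq => (Finset.mem_filter.mp hq).2.1)

lemma prime_dvd_Pa {z : ℝ} {a q : ℕ} (hq : q.Prime) (hdvd : q ∣ Pa z a) :
    q ≤ ⌊z⌋₊ ∧ ¬ q ∣ a := by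
  obtain ⟨r, hr, hqr⟩ := hq.prime.exists_mem_finset_dvd hdvd
  rw [Finset.mem_filter, Finset.mem_range] at hr
  have : q = r := ((Nat.prime_dvd_prime_iff_eq hq hr.2.1).mp hqr)
  subst this
  exact ⟨by omega, hr.2.2⟩

lemma dvd_Pa {z : ℝ} {a n : ℕ} (hn : Squarefree n)
    (h1 : ∀ q, q.Prime → q ∣ n → q ≤ ⌊z⌋₊ ∧ ¬ q ∣ a) : n ∣ Pa z a := by
  rw [← Nat.prod_primeFactors_of_squarefree hn]
  apply Finset.prod_dvd_prod_of_subset _ _ _ ?_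
  intro q hq
  rw [Nat.mem_primeFactors] at hq
  obtain ⟨h2, h3⟩ := h1 q hq.1 hq.2.1
  exact Finset.mem_filter.mpr ⟨Finset.mem_range.mpr (by omega), hq.1, h3⟩

lemma kdvd_iff {z : ℝ} {a k m : ℕ} (hk : Squarefree k) (hk1 : 1 ≤ k)
    (hkz : k ≤ ⌊z⌋₊) (hm : m ∣ Pa z a) : k * m ∣ Pa z a ↔ Nat.Coprime k (m * a) := by
  constructor
  · intro hkm
    have hsq : Squarefree (k * m) := (Pa_squarefree z a).squarefree_of_dvd hkm
    have hckm : Nat.Coprime k m := (Nat.squarefree_mul_iff.mp hsq).1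
    have hcka : Nat.Coprime k a := by
      by_contra hc
      obtain ⟨q, hq, hq1, hq2⟩ := Nat.Prime.not_coprime_iff_dvd.mp hc
      exact (prime_dvd_Pa hq (hq1.trans ((dvd_mul_right k m).trans hkm))).2 hq2
    exact Nat.Coprime.mul_right hckm hcka
  · intro hc
    have hckm : Nat.Coprime k m := (Nat.coprime_mul_iff_right.mp hc).1
    have hcka : Nat.Coprime k a := (Nat.coprime_mul_iff_right.mp hc).2
    refine Nat.Coprime.mul_dvd_of_dvd_of_dvd hckm ?_ hm
    apply dvd_Pa hk
    intro q hq hqk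
    refine ⟨le_trans (Nat.le_of_dvd (by omega) hqk) hkz, ?_⟩
    exact (Nat.Prime.coprime_iff_not_dvd hq).mp (Nat.Coprime.coprime_dvd_left hqk hcka)

/-- For a prime `p` and squarefree `d` with `(d,p) = 1` and `(dp,a) = 1`:
`ρ_{dp} = -ρ_d + (μ(d)h(d)/(H_a(z)g(d))) ∑_{z/(dp) < k ≤ z/d, (k,dpa)=1} μ(k)² h(k)`. -/
theorem rho_mul_prime (a : ℕ) (ha : 1 ≤ a) (z : ℝ) (hz : 2 ≤ z) (g h : ℕ → ℝ)
    (hg1 : g 1 = 1) (hgmul : ∀ m n : ℕ, Nat.Coprime m n → g (m * n) = g m * g n)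
    (hgp : ∀ p : ℕ, p.Prime → 0 < g p ∧ g p < 1)
    (hh1 : h 1 = 1) (hhmul : ∀ m n : ℕ, Nat.Coprime m n → h (m * n) = h m * h n)
    (hhp : ∀ p : ℕ, p.Prime → h p = g p / (1 - g p))
    (p : ℕ) (hp : p.Prime) (d : ℕ) (hd : Squarefree d)
    (hdp : Nat.Coprime d p) (hdpa : Nat.Coprime (d * p) a) :
    rhoCoeff z a g h (d * p) =
      -rhoCoeff z a g h d +
        ((ArithmeticFunction.moebius d : ℝ) * h d / (Ha z a h * g d)) *
          ∑ k ∈ (Finset.Ioc ⌊z / ((d * p : ℕ) : ℝ)⌋₊ ⌊z / (d : ℝ)⌋₊).filter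
              (fun k => Nat.gcd k (d * p * a) = 1),
            (ArithmeticFunction.moebius k : ℝ) ^ 2 * h k := by
  have hd0 : d ≠ 0 := hd.ne_zero
  have hd1 : 1 ≤ d := Nat.one_le_iff_ne_zero.mpr hd0
  have hp0 : 0 < p := hp.pos
  have hda : Nat.Coprime d a := (Nat.coprime_mul_iff_left.mp hdpa).1
  have hpa : Nat.Coprime p a := (Nat.coprime_mul_iff_left.mp hdpa).2
  have hpna : ¬ p ∣ a := (Nat.Prime.coprime_iff_not_dvd hp).mp hpa
  simp only [rhoCoeff]
  set D := ⌊z / (d : ℝ)⌋₊ with hDdef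
  set Dp := ⌊z / ((d * p : ℕ) : ℝ)⌋₊ with hDpdef
  have hDp : Dp = D / p := by
    rw [hDpdef, hDdef]
    have hcast : ((d * p : ℕ) : ℝ) = (d : ℝ) * (p : ℝ) := by push_cast; ring
    rw [hcast, ← div_div, Nat.floor_div_natCast]
  have hDpD : Dp ≤ D := hDp ▸ Nat.div_le_self D p
  have hDz : D ≤ ⌊z⌋₊ := Nat.floor_mono (div_le_self (by linarith) (by exact_mod_cast hd1))
  have fzero : ∀ k : ℕ, ¬ Squarefree k →
      (ArithmeticFunction.moebius k : ℝ) ^ 2 * h k = 0 := by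
    intro k hk
    rw [ArithmeticFunction.moebius_eq_zero_of_not_squarefree hk]
    push_cast
    ring
  by_cases hdP : d ∣ Pa z a
  · -- main case
    -- p ∣ Pa when relevant is derived pointwise
    have stepA : ∑ k ∈ (Finset.Icc 1 D).filter (fun k => (k * d ∣ Pa z a) ∧ ¬ p ∣ k),
          (ArithmeticFunction.moebius k : ℝ) ^ 2 * h k
        = ∑ k ∈ (Finset.Icc 1 D).filter (fun k => Nat.gcd k (d * p * a) = 1),
          (ArithmeticFunction.moebius k : ℝ) ^ 2 * h k := by
      rw [Finset.sum_filter, Finset.sum_filter]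
      apply Finset.sum_congr rfl
      intro k hk
      rw [Finset.mem_Icc] at hk
      by_cases hsq : Squarefree k
      · apply if_congr _ rfl rfl
        rw [kdvd_iff hsq hk.1 (le_trans hk.2 hDz) hdP]
        constructor
        · rintro ⟨h1, h2⟩
          have hkd : Nat.Coprime k d := (Nat.coprime_mul_iff_right.mp h1).1
          have hka : Nat.Coprime k a := (Nat.coprime_mul_iff_right.mp h1).2
          have hkp : Nat.Coprime k p := (Nat.Prime.coprime_iff_not_dvd hp).mpr h2 |>.symm
          exact Nat.Coprime.mul_right (Nat.Coprime.mul_right hkd hkp) hka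
        · intro h1
          have h1' : Nat.Coprime k (d * p * a) := h1
          have hkdp : Nat.Coprime k (d * p) := (Nat.coprime_mul_iff_right.mp h1').1
          have hka : Nat.Coprime k a := (Nat.coprime_mul_iff_right.mp h1').2
          have hkd : Nat.Coprime k d := (Nat.coprime_mul_iff_right.mp hkdp).1
          have hkp : Nat.Coprime k p := (Nat.coprime_mul_iff_right.mp hkdp).2
          exact ⟨Nat.Coprime.mul_right hkd hka,
            (Nat.Prime.coprime_iff_not_dvd hp).mp hkp.symm⟩
      · rw [fzero k hsq]
        simp
    have stepB : ∑ k ∈ (Finset.Icc 1 D).filter (fun k => (k * d ∣ Pa z a) ∧ p ∣ k),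
          (ArithmeticFunction.moebius k : ℝ) ^ 2 * h k
        = h p * ∑ m ∈ (Finset.Icc 1 Dp).filter (fun m => m * (d * p) ∣ Pa z a),
          (ArithmeticFunction.moebius m : ℝ) ^ 2 * h m := by
      rw [Finset.mul_sum]
      apply Finset.sum_bij' (fun k _ => k / p) (fun m _ => m * p)
      · intro k hk
        rw [Finset.mem_filter, Finset.mem_Icc] at hk
        obtain ⟨⟨hk1, hk2⟩, hkd, hpk⟩ := hk
        have hkp : k / p * p = k := Nat.div_mul_cancel hpk
        rw [Finset.mem_filter, Finset.mem_Icc]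
        refine ⟨⟨?_, ?_⟩, ?_⟩
        · exact (Nat.one_le_div_iff hp0).mpr (Nat.le_of_dvd (by omega) hpk)
        · rw [hDp]; exact Nat.div_le_div_right hk2
        · have : k / p * (d * p) = k * d := by rw [mul_comm d p, ← mul_assoc, hkp]
          rw [this]; exact hkd
      · intro m hm
        rw [Finset.mem_filter, Finset.mem_Icc] at hm
        obtain ⟨⟨hm1, hm2⟩, hmd⟩ := hm
        rw [Finset.mem_filter, Finset.mem_Icc]
        refine ⟨⟨?_, ?_⟩, ?_, ?_⟩
        · exact Nat.one_le_iff_ne_zero.mpr (by positivity)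
        · rw [hDp] at hm2; exact (Nat.le_div_iff_mul_le hp0).mp hm2
        · have : m * p * d = m * (d * p) := by ring
          rw [this]; exact hmd
        · exact dvd_mul_left p m
      · intro k hk
        rw [Finset.mem_filter] at hk
        exact Nat.div_mul_cancel hk.2.2
      · intro m _
        rw [Nat.mul_div_assoc _ dvd_rfl, Nat.div_self hp0, mul_one]
      · intro k hk
        rw [Finset.mem_filter] at hk
        obtain ⟨_, hkd, hpk⟩ := hk
        have hksq : Squarefree k :=
          (Pa_squarefree z a).squarefree_of_dvd ((dvd_mul_right k d).trans hkd)
        have hkp : k / p * p = k := Nat.div_mul_cancel hpk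
        have hcop : Nat.Coprime (k / p) p := by
          have hsq2 : Squarefree (k / p * p) := by rw [hkp]; exact hksq
          exact (Nat.squarefree_mul_iff.mp hsq2).1
        conv_lhs => rw [← hkp]
        rw [
          ArithmeticFunction.isMultiplicative_moebius.map_mul_of_coprime hcop,
          hhmul _ _ hcop, ArithmeticFunction.moebius_apply_prime hp]
        push_cast
        ring
    have stepC : ∑ k ∈ (Finset.Icc 1 D).filter (fun k => Nat.gcd k (d * p * a) = 1),
          (ArithmeticFunction.moebius k : ℝ) ^ 2 * h k
        = (∑ k ∈ (Finset.Icc 1 Dp).filter (fun k => Nat.gcd k (d * p * a) = 1),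
            (ArithmeticFunction.moebius k : ℝ) ^ 2 * h k)
          + ∑ k ∈ (Finset.Ioc Dp D).filter (fun k => Nat.gcd k (d * p * a) = 1),
            (ArithmeticFunction.moebius k : ℝ) ^ 2 * h k := by
      have hunion : Finset.Icc 1 D = Finset.Icc 1 Dp ∪ Finset.Ioc Dp D := by
        ext k
        simp only [Finset.mem_Icc, Finset.mem_Ioc, Finset.mem_union]
        omega
      have hdisj : Disjoint (Finset.Icc 1 Dp) (Finset.Ioc Dp D) := by
        rw [Finset.disjoint_left]
        intro k h1 h2
        rw [Finset.mem_Icc] at h1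
        rw [Finset.mem_Ioc] at h2
        omega
      rw [hunion, Finset.filter_union,
        Finset.sum_union (Finset.disjoint_filter_filter hdisj)]
    have stepD : ∑ k ∈ (Finset.Icc 1 Dp).filter (fun k => Nat.gcd k (d * p * a) = 1),
          (ArithmeticFunction.moebius k : ℝ) ^ 2 * h k
        = ∑ k ∈ (Finset.Icc 1 Dp).filter (fun k => k * (d * p) ∣ Pa z a),
          (ArithmeticFunction.moebius k : ℝ) ^ 2 * h k := by
      rw [Finset.sum_filter, Finset.sum_filter]
      apply Finset.sum_congr rfl
      intro k hk
      rw [Finset.mem_Icc] at hk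
      have hDp1 : 0 < Dp := lt_of_lt_of_le (by omega) (hk.1.trans hk.2)
      have hdpz : ((d * p : ℕ) : ℝ) ≤ z := by
        have h2 : (1 : ℝ) ≤ z / ((d * p : ℕ) : ℝ) := by
          rw [hDpdef] at hDp1
          exact Nat.floor_pos.mp hDp1
        have hc : (0 : ℝ) < ((d * p : ℕ) : ℝ) := by positivity
        have := (le_div_iff₀ hc).mp h2
        linarith
      have hpz : p ≤ ⌊z⌋₊ := by
        apply Nat.le_floor
        calc (p : ℝ) ≤ ((d * p : ℕ) : ℝ) := by
              exact_mod_cast Nat.le_mul_of_pos_left p (by omega)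
          _ ≤ z := hdpz
      have hpP : p ∣ Pa z a := by
        apply dvd_Pa hp.squarefree
        intro q hq hqp
        have : q = p := (Nat.prime_dvd_prime_iff_eq hq hp).mp hqp
        subst this
        exact ⟨hpz, hpna⟩
      have hdpP : d * p ∣ Pa z a := Nat.Coprime.mul_dvd_of_dvd_of_dvd hdp hdP hpP
      by_cases hsq : Squarefree k
      · apply if_congr _ rfl rfl
        exact (kdvd_iff hsq hk.1 (le_trans hk.2 (hDpD.trans hDz)) hdpP).symm
      · rw [fzero k hsq]
        simp
    have key : ∑ k ∈ (Finset.Icc 1 D).filter (fun k => k * d ∣ Pa z a),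
          (ArithmeticFunction.moebius k : ℝ) ^ 2 * h k
        = (∑ k ∈ (Finset.Ioc Dp D).filter (fun k => Nat.gcd k (d * p * a) = 1),
            (ArithmeticFunction.moebius k : ℝ) ^ 2 * h k)
          + (1 + h p) * ∑ k ∈ (Finset.Icc 1 Dp).filter (fun k => k * (d * p) ∣ Pa z a),
            (ArithmeticFunction.moebius k : ℝ) ^ 2 * h k := by
      rw [← Finset.sum_filter_add_sum_filter_not
        ((Finset.Icc 1 D).filter (fun k => k * d ∣ Pa z a)) (fun k => p ∣ k),
        Finset.filter_filter, Finset.filter_filter, stepB, stepA, stepC, stepD]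
      ring
    have hgp0 : g p ≠ 0 := ne_of_gt (hgp p hp).1
    have hgp1 : (1 : ℝ) - g p ≠ 0 := by
      have h2 := (hgp p hp).2
      intro hE
      linarith
    have hhpgp : h p = g p * (1 + h p) := by
      rw [hhp p hp]
      field_simp
      try ring
    have hmu : (ArithmeticFunction.moebius (d * p) : ℝ)
        = -(ArithmeticFunction.moebius d : ℝ) := by
      rw [ArithmeticFunction.isMultiplicative_moebius.map_mul_of_coprime hdp,
        ArithmeticFunction.moebius_apply_prime hp]
      push_cast
      ring
    have hC : (ArithmeticFunction.moebius (d * p) : ℝ) * h (d * p) / (Ha z a h * g (d * p))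
        = -((ArithmeticFunction.moebius d : ℝ) * h d / (Ha z a h * g d)) * (1 + h p) := by
      rw [hmu, hgmul d p hdp, hhmul d p hdp]
      have e1 : -(ArithmeticFunction.moebius d : ℝ) * (h d * h p)
          = (-(ArithmeticFunction.moebius d : ℝ) * h d * (1 + h p)) * g p := by
        linear_combination (-(ArithmeticFunction.moebius d : ℝ) * h d) * hhpgp
      have e2 : Ha z a h * (g d * g p) = (Ha z a h * g d) * g p := by ring
      rw [e1, e2, mul_div_mul_right _ _ hgp0]
      ring
    rw [hC, key]
    ring
  · -- degenerate case : D = 0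
    have hDzero : D = 0 := by
      by_cases hall : ∀ q, q.Prime → q ∣ d → q ≤ ⌊z⌋₊
      · exact absurd (dvd_Pa hd (fun q hq hqd => ⟨hall q hq hqd,
          (Nat.Prime.coprime_iff_not_dvd hq).mp (Nat.Coprime.coprime_dvd_left hqd hda)⟩)) hdP
      · push_neg at hall
        obtain ⟨q, hq, hqd, hqz⟩ := hall
        have h2 : ⌊z⌋₊ + 1 ≤ d := le_trans (by omega) (Nat.le_of_dvd (by omega) hqd)
        have hzd : z < (d : ℝ) := by
          calc z < ((⌊z⌋₊ + 1 : ℕ) : ℝ) := by exact_mod_cast Nat.lt_floor_add_one z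
            _ ≤ (d : ℝ) := by exact_mod_cast h2
        rw [hDdef]
        exact Nat.floor_eq_zero.mpr ((div_lt_one (by positivity)).mpr hzd)
    have hDp0 : Dp = 0 := by rw [hDp, hDzero]; simp
    rw [hDzero, hDp0]
    have e1 : Finset.Icc 1 0 = (∅ : Finset ℕ) := by simp
    have e2 : Finset.Ioc 0 0 = (∅ : Finset ℕ) := by simp
    rw [e1, e2]
    simp
end

section
/- There is an absolute constant C > 0 with the following property. Let z ≥ 2 be real and let P, M, q, a, δ be squarefree positive integers with gcd(q, M) = 1, qM | P, and gcd(P, a) = gcd(P, δ) = 1. Let h be a multiplicative arithmetic function with h(n) ≥ 0 for all squarefree n. Let q = r_1 r_2 ⋯ r_s be a factorization of q into distinct primes, and set α_0 = 1 and α_k = r_1⋯r_k for 1 ≤ k ≤ s. Then for each 1 ≤ k ≤ s, the quantity R_k(M, δ) = ∑_{d ≤ z, gcd(d,a)=1, gcd(d,P)=M, δ | d} μ(d)h(d)·∑_{z/(dα_k) < l ≤ z/(dα_{k−1}), gcd(l, dα_k a)=1} μ(l)²h(l) satisfies |R_k(M, δ)| ≤ C·μ(Mδ)²·h(Mδ)·∏_{p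 | P} (1 + h(p)). -/
open Finset

private lemma sum_moebius_divisors (n : ℕ) :
    ∑ d ∈ n.divisors, (ArithmeticFunction.moebius d : ℤ) = if n = 1 then 1 else 0 := by
  rw [← ArithmeticFunction.coe_mul_zeta_apply, ArithmeticFunction.moebius_mul_coe_zeta,
    ArithmeticFunction.one_apply]

private lemma coprime_of_no_common_prime {m n : ℕ}
    (h : ∀ p, p.Prime → p ∣ m → p ∣ n → False) : Nat.Coprime m n := by
  by_contra hc
  obtain ⟨p, hp, h1, h2⟩ := Nat.Prime.not_coprime_iff_dvd.mp hc
  exact h p hp h1 h2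

private lemma sum_divisors_eq_prod (h : ℕ → ℝ) (h1 : h 1 = 1)
    (hmul : ∀ m n : ℕ, Nat.Coprime m n → h (m * n) = h m * h n)
    {P : ℕ} (hP : Squarefree P) :
    ∑ d ∈ P.divisors, h d = ∏ p ∈ P.primeFactors, (1 + h p) := by
  classical
  set f : ArithmeticFunction ℝ := ⟨fun n => if n = 0 then 0 else h n, by simp⟩ with hfdef
  have hfapp : ∀ n : ℕ, n ≠ 0 → f n = h n := fun n hn => by
    simp [hfdef, ArithmeticFunction.coe_mk, hn]
  have hf : f.IsMultiplicative := by
    constructor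
    · rw [hfapp 1 one_ne_zero]; exact h1
    · intro m n hmn
      rcases eq_or_ne m 0 with rfl | hm
      · obtain rfl : n = 1 := Nat.coprime_zero_left n |>.mp hmn
        simp [hfdef, ArithmeticFunction.coe_mk]
      rcases eq_or_ne n 0 with rfl | hn
      · obtain rfl : m = 1 := Nat.coprime_zero_right m |>.mp hmn
        simp [hfdef, ArithmeticFunction.coe_mk]
      rw [hfapp _ (mul_ne_zero hm hn), hfapp _ hm, hfapp _ hn]
      exact hmul m n hmn
  have key := hf.prodPrimeFactors_one_add_of_squarefree hP
  calc ∑ d ∈ P.divisors, h d = ∑ d ∈ P.divisors, f d := by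
        refine Finset.sum_congr rfl fun d hd => ?_
        exact (hfapp d (Nat.pos_of_mem_divisors hd).ne').symm
    _ = ∏ p ∈ P.primeFactors, (1 + f p) := key.symm
    _ = ∏ p ∈ P.primeFactors, (1 + h p) := by
        refine Finset.prod_congr rfl fun p hp => ?_
        rw [hfapp p (Nat.prime_of_mem_primeFactors hp).ne_zero]

private lemma Rk_aux (z : ℝ) (hz : 2 ≤ z) (h : ℕ → ℝ) (h1 : h 1 = 1)
    (hmul : ∀ m n : ℕ, Nat.Coprime m n → h (m * n) = h m * h n)
    (hpos : ∀ n : ℕ, Squarefree n → 0 ≤ h n)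
    (P M a δ A B : ℕ) (hP : Squarefree P) (hδ : Squarefree δ)
    (hMP : M ∣ P) (hPa : Nat.Coprime P a) (hPδ : Nat.Coprime P δ)
    (hδa : Nat.Coprime δ a) (hBA : B ∣ A) (hAP : A ∣ P) :
    |∑ d ∈ (Finset.Icc 1 ⌊z⌋₊).filter
          (fun d => Nat.gcd d a = 1 ∧ Nat.gcd d P = M ∧ δ ∣ d),
        (ArithmeticFunction.moebius d : ℝ) * h d *
          ∑ l ∈ (Finset.Ioc ⌊z / ((d * A : ℕ) : ℝ)⌋₊ ⌊z / ((d * B : ℕ) : ℝ)⌋₊).filter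
              (fun l => Nat.gcd l (d * A * a) = 1),
            (ArithmeticFunction.moebius l : ℝ) ^ 2 * h l| ≤
      (ArithmeticFunction.moebius (M * δ) : ℝ) ^ 2 * h (M * δ) *
        ∏ p ∈ P.primeFactors, (1 + h p) := by
  classical
  set c := M * δ with hcdef
  have hP0 : P ≠ 0 := hP.ne_zero
  have hMsq : Squarefree M := hP.squarefree_of_dvd hMP
  have hMδcop : Nat.Coprime M δ := Nat.Coprime.coprime_dvd_left hMP hPδ
  have hcsq : Squarefree c := (Nat.squarefree_mul hMδcop).mpr ⟨hMsq, hδ⟩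
  have hc0 : c ≠ 0 := hcsq.ne_zero
  have hA0 : A ≠ 0 := fun hA => hP0 (zero_dvd_iff.mp (hA ▸ hAP))
  have hB0 : B ≠ 0 := fun hB => hA0 (Nat.eq_zero_of_zero_dvd (hB ▸ hBA))
  have hMa : Nat.Coprime M a := Nat.Coprime.coprime_dvd_left hMP hPa
  have hca : Nat.Coprime c a := Nat.Coprime.mul hMa hδa
  have hzpos : (0 : ℝ) < z := lt_of_lt_of_le two_pos hz
  have hflt : ∀ t l : ℕ, t ≠ 0 → (⌊z / (t : ℝ)⌋₊ < l ↔ z < (t : ℝ) * l) := by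
    intro t l ht
    have ht' : (0 : ℝ) < t := Nat.cast_pos.mpr (Nat.pos_of_ne_zero ht)
    rw [Nat.floor_lt (le_of_lt (div_pos hzpos ht')), div_lt_iff₀ ht', mul_comm]
  have hfle : ∀ t l : ℕ, t ≠ 0 → (l ≤ ⌊z / (t : ℝ)⌋₊ ↔ (t : ℝ) * l ≤ z) := by
    intro t l ht
    have ht' : (0 : ℝ) < t := Nat.cast_pos.mpr (Nat.pos_of_ne_zero ht)
    rw [Nat.le_floor_iff (le_of_lt (div_pos hzpos ht')), le_div_iff₀ ht', mul_comm]
  set Mset := (Finset.Ioc ⌊z / ((c * A : ℕ) : ℝ)⌋₊ ⌊z / ((c * B : ℕ) : ℝ)⌋₊).filter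
      (fun m => Squarefree m ∧ Nat.gcd m (c * A * a) = 1) with hMset
  have sum_eq :
      ∑ d ∈ (Finset.Icc 1 ⌊z⌋₊).filter
            (fun d => Nat.gcd d a = 1 ∧ Nat.gcd d P = M ∧ δ ∣ d),
          (ArithmeticFunction.moebius d : ℝ) * h d *
            ∑ l ∈ (Finset.Ioc ⌊z / ((d * A : ℕ) : ℝ)⌋₊ ⌊z / ((d * B : ℕ) : ℝ)⌋₊).filter
                (fun l => Nat.gcd l (d * A * a) = 1),
              (ArithmeticFunction.moebius l : ℝ) ^ 2 * h l
        = (ArithmeticFunction.moebius c : ℝ) * h c *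
            ∑ m ∈ Mset.filter (fun m => m ∣ P), h m := by
    calc
      _ = ∑ x ∈ ((Finset.Icc 1 ⌊z⌋₊).filter
              (fun d => Nat.gcd d a = 1 ∧ Nat.gcd d P = M ∧ δ ∣ d)).sigma
            (fun d => (Finset.Ioc ⌊z / ((d * A : ℕ) : ℝ)⌋₊ ⌊z / ((d * B : ℕ) : ℝ)⌋₊).filter
                (fun l => Nat.gcd l (d * A * a) = 1)),
            (ArithmeticFunction.moebius x.1 : ℝ) * h x.1 *
              ((ArithmeticFunction.moebius x.2 : ℝ) ^ 2 * h x.2) := by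
        rw [Finset.sum_sigma]
        exact Finset.sum_congr rfl fun d _ => Finset.mul_sum _ _ _
      _ = ∑ x ∈ (((Finset.Icc 1 ⌊z⌋₊).filter
              (fun d => Nat.gcd d a = 1 ∧ Nat.gcd d P = M ∧ δ ∣ d)).sigma
            (fun d => (Finset.Ioc ⌊z / ((d * A : ℕ) : ℝ)⌋₊ ⌊z / ((d * B : ℕ) : ℝ)⌋₊).filter
                (fun l => Nat.gcd l (d * A * a) = 1))).filter
            (fun x => Squarefree x.1 ∧ Squarefree x.2),
            (ArithmeticFunction.moebius x.1 : ℝ) * h x.1 *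
              ((ArithmeticFunction.moebius x.2 : ℝ) ^ 2 * h x.2) := by
        refine (Finset.sum_filter_of_ne fun x _ hx => ?_).symm
        by_contra hs
        rw [not_and_or] at hs
        apply hx
        rcases hs with hs | hs <;>
          rw [ArithmeticFunction.moebius_eq_zero_of_not_squarefree hs] <;> simp
      _ = ∑ y ∈ Mset.sigma (fun m => m.divisors.filter (fun n => Nat.gcd n P = 1)),
            (ArithmeticFunction.moebius c : ℝ) * h c *
              ((ArithmeticFunction.moebius y.2 : ℝ) * (h y.2 * h (y.1 / y.2))) := by
        refine Finset.sum_nbij' (fun x => ⟨x.1 / c * x.2, x.1 / c⟩)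
          (fun y => ⟨c * y.2, y.1 / y.2⟩) ?_ ?_ ?_ ?_ ?_
        · -- forward membership
          rintro ⟨d, l⟩ hx
          simp only [Finset.mem_filter, Finset.mem_sigma, Finset.mem_Icc, Finset.mem_Ioc] at hx
          obtain ⟨⟨⟨⟨hd1, hdz⟩, hda, hdP, hδd⟩, ⟨hllb, hlub⟩, hla⟩, hsd, hsl⟩ := hx
          have hMd : M ∣ d := hdP ▸ Nat.gcd_dvd_left d P
          have hcd : c ∣ d := Nat.Coprime.mul_dvd_of_dvd_of_dvd hMδcop hMd hδd
          simp only [Finset.mem_sigma, hMset, Finset.mem_filter, Finset.mem_Ioc,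
            Nat.mem_divisors]
          set n := d / c with hn
          have hdcn : d = c * n := (Nat.mul_div_cancel' hcd).symm
          have hd0 : d ≠ 0 := by omega
          have hn0 : n ≠ 0 := fun h0 => hd0 (by rw [hdcn, h0, mul_zero])
          have hl0 : l ≠ 0 := by omega
          have hccn : Nat.Coprime c n := Nat.coprime_of_squarefree_mul (hdcn ▸ hsd)
          have hnd : n ∣ d := ⟨c, by rw [hdcn, mul_comm]⟩
          have hsn : Squarefree n := hsd.squarefree_of_dvd hnd
          have hnP : Nat.Coprime n P := by
            apply coprime_of_no_common_prime
            intro p pp hpn hpP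
            have hpd : p ∣ d := hdcn ▸ hpn.mul_left c
            have hpM : p ∣ M := hdP ▸ Nat.dvd_gcd hpd hpP
            have hpc : p ∣ c := hpM.mul_right δ
            have hccn' : Nat.gcd c n = 1 := hccn
            exact pp.ne_one (Nat.dvd_one.mp (hccn' ▸ Nat.dvd_gcd hpc hpn))
          have hdd : d ∣ d * A * a := by
            have : d * (A * a) = d * A * a := (mul_assoc d A a).symm
            exact this ▸ dvd_mul_right d (A * a)
          have hld : Nat.Coprime l d := Nat.Coprime.coprime_dvd_right hdd hla
          have hln : Nat.Coprime l n := Nat.Coprime.coprime_dvd_right hnd hld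
          have hlA : Nat.Coprime l A :=
            Nat.Coprime.coprime_dvd_right ((dvd_mul_left A d).trans (dvd_mul_right (d * A) a)) hla
          have hla' : Nat.Coprime l a :=
            Nat.Coprime.coprime_dvd_right (dvd_mul_left a (d * A)) hla
          have hlc : Nat.Coprime l c := Nat.Coprime.coprime_dvd_right hcd hld
          have hm_lb : ⌊z / ((c * A : ℕ) : ℝ)⌋₊ < n * l := by
            rw [hflt _ _ (mul_ne_zero hc0 hA0)]
            have hlb := (hflt _ _ (mul_ne_zero hd0 hA0)).mp hllb
            have heq : ((c * A : ℕ) : ℝ) * ((n * l : ℕ) : ℝ) = ((d * A : ℕ) : ℝ) * (l : ℝ) := by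
              push_cast [hdcn]; ring
            rw [heq]; exact hlb
          have hm_ub : n * l ≤ ⌊z / ((c * B : ℕ) : ℝ)⌋₊ := by
            rw [hfle _ _ (mul_ne_zero hc0 hB0)]
            have hub := (hfle _ _ (mul_ne_zero hd0 hB0)).mp hlub
            have heq : ((c * B : ℕ) : ℝ) * ((n * l : ℕ) : ℝ) = ((d * B : ℕ) : ℝ) * (l : ℝ) := by
              push_cast [hdcn]; ring
            rw [heq]; exact hub
          have hsm : Squarefree (n * l) := (Nat.squarefree_mul hln.symm).mpr ⟨hsn, hsl⟩
          have hnc : Nat.Coprime n c := hccn.symm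
          have hnA : Nat.Coprime n A := hnP.coprime_dvd_right hAP
          have hna : Nat.Coprime n a := Nat.Coprime.coprime_dvd_left hnd hda
          have hmca : Nat.gcd (n * l) (c * A * a) = 1 :=
            Nat.Coprime.mul ((hnc.mul_right hnA).mul_right hna)
              ((hlc.mul_right hlA).mul_right hla')
          exact ⟨⟨⟨hm_lb, hm_ub⟩, hsm, hmca⟩, ⟨dvd_mul_right n l, mul_ne_zero hn0 hl0⟩, hnP⟩
        · -- backward membership
          rintro ⟨m, n⟩ hy
          simp only [Finset.mem_sigma, hMset, Finset.mem_filter, Finset.mem_Ioc,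
            Nat.mem_divisors] at hy
          obtain ⟨⟨⟨hm_lb, hm_ub⟩, hsm, hmca⟩, ⟨hnm, hm0⟩, hnP⟩ := hy
          simp only [Finset.mem_filter, Finset.mem_sigma, Finset.mem_Icc, Finset.mem_Ioc]
          set l := m / n with hl
          have hmnl : m = n * l := (Nat.mul_div_cancel' hnm).symm
          have hn0 : n ≠ 0 := fun h0 => hm0 (by rw [hmnl, h0, zero_mul])
          have hl0 : l ≠ 0 := fun h0 => hm0 (by rw [hmnl, h0, mul_zero])
          have hlm : l ∣ m := ⟨n, by rw [hmnl, mul_comm]⟩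
          have hsl : Squarefree l := hsm.squarefree_of_dvd hlm
          have hsn : Squarefree n := hsm.squarefree_of_dvd hnm
          have hnl_cop : Nat.Coprime n l := Nat.coprime_of_squarefree_mul (hmnl ▸ hsm)
          have hmc : Nat.Coprime m c :=
            Nat.Coprime.coprime_dvd_right
              ((dvd_mul_right c A).trans (dvd_mul_right (c * A) a)) hmca
          have hmA : Nat.Coprime m A :=
            Nat.Coprime.coprime_dvd_right
              ((dvd_mul_left A c).trans (dvd_mul_right (c * A) a)) hmca
          have hma : Nat.Coprime m a :=
            Nat.Coprime.coprime_dvd_right (dvd_mul_left a (c * A)) hmca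
          have hnc : Nat.Coprime n c := Nat.Coprime.coprime_dvd_left hnm hmc
          have hna : Nat.Coprime n a := Nat.Coprime.coprime_dvd_left hnm hma
          have hlc : Nat.Coprime l c := Nat.Coprime.coprime_dvd_left hlm hmc
          have hlA : Nat.Coprime l A := Nat.Coprime.coprime_dvd_left hlm hmA
          have hla : Nat.Coprime l a := Nat.Coprime.coprime_dvd_left hlm hma
          have hd0 : c * n ≠ 0 := mul_ne_zero hc0 hn0
          have hmub' := (hfle _ _ (mul_ne_zero hc0 hB0)).mp hm_ub
          have hdz : c * n ≤ ⌊z⌋₊ := by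
            apply Nat.le_floor
            have h1' : ((c * n : ℕ) : ℝ) ≤ ((c * B : ℕ) : ℝ) * (m : ℝ) := by
              push_cast
              have hnm' : (n : ℝ) ≤ (m : ℝ) :=
                Nat.cast_le.mpr (Nat.le_of_dvd (Nat.pos_of_ne_zero hm0) hnm)
              have hB1 : (1 : ℝ) ≤ (B : ℝ) := Nat.one_le_cast.mpr (Nat.pos_of_ne_zero hB0)
              have hm1 : (0 : ℝ) ≤ (m : ℝ) := Nat.cast_nonneg m
              have hc1 : (0 : ℝ) ≤ (c : ℝ) := Nat.cast_nonneg c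
              have hn1 : (0 : ℝ) ≤ (n : ℝ) := Nat.cast_nonneg n
              have e1 : (c : ℝ) * n ≤ c * m := mul_le_mul_of_nonneg_left hnm' hc1
              have e2 : (c : ℝ) * m ≤ c * B * m := by nlinarith [mul_nonneg hc1 hm1]
              linarith
            exact h1'.trans hmub'
          obtain ⟨P', hP'⟩ := hMP
          have hP'P : P' ∣ P := ⟨M, by rw [hP', mul_comm]⟩
          have hδP' : Nat.Coprime δ P' := Nat.Coprime.coprime_dvd_right hP'P hPδ.symm
          have hnP' : Nat.Coprime n P' := Nat.Coprime.coprime_dvd_right hP'P hnP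
          have hgcd : Nat.gcd (c * n) P = M := by
            have hcn : c * n = M * (δ * n) := by rw [hcdef]; ring
            have hcop : Nat.gcd (δ * n) P' = 1 := Nat.Coprime.mul hδP' hnP'
            rw [hcn, hP', Nat.gcd_mul_left, hcop, mul_one]
          have hda : Nat.gcd (c * n) a = 1 := Nat.Coprime.mul hca hna
          have hδd : δ ∣ c * n := (dvd_mul_left δ M).trans (dvd_mul_right c n)
          have hl_lb : ⌊z / ((c * n * A : ℕ) : ℝ)⌋₊ < l := by
            rw [hflt _ _ (mul_ne_zero hd0 hA0)]
            have hlb := (hflt _ _ (mul_ne_zero hc0 hA0)).mp hm_lb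
            have heq : ((c * n * A : ℕ) : ℝ) * (l : ℝ) = ((c * A : ℕ) : ℝ) * (m : ℝ) := by
              push_cast [hmnl]; ring
            rw [heq]; exact hlb
          have hl_ub : l ≤ ⌊z / ((c * n * B : ℕ) : ℝ)⌋₊ := by
            rw [hfle _ _ (mul_ne_zero hd0 hB0)]
            have heq : ((c * n * B : ℕ) : ℝ) * (l : ℝ) = ((c * B : ℕ) : ℝ) * (m : ℝ) := by
              push_cast [hmnl]; ring
            rw [heq]; exact hmub'
          have hlgcd : Nat.gcd l (c * n * A * a) = 1 :=
            ((hlc.mul_right hnl_cop.symm).mul_right hlA).mul_right hla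
          have hsd : Squarefree (c * n) := (Nat.squarefree_mul hnc.symm).mpr ⟨hcsq, hsn⟩
          exact ⟨⟨⟨⟨Nat.one_le_iff_ne_zero.mpr hd0, hdz⟩, hda, hgcd, hδd⟩,
            ⟨hl_lb, hl_ub⟩, hlgcd⟩, hsd, hsl⟩
        · -- left inverse
          rintro ⟨d, l⟩ hx
          simp only [Finset.mem_filter, Finset.mem_sigma, Finset.mem_Icc, Finset.mem_Ioc] at hx
          obtain ⟨⟨⟨⟨hd1, _⟩, _, hdP, hδd⟩, _, _⟩, _, _⟩ := hx
          have hMd : M ∣ d := hdP ▸ Nat.gcd_dvd_left d P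
          have hcd : c ∣ d := Nat.Coprime.mul_dvd_of_dvd_of_dvd hMδcop hMd hδd
          have hd0 : d ≠ 0 := by omega
          have e1 : c * (d / c) = d := Nat.mul_div_cancel' hcd
          have hn0 : 0 < d / c := by
            rcases Nat.eq_zero_or_pos (d / c) with h0 | h0
            · exfalso; rw [h0, mul_zero] at e1; exact hd0 e1.symm
            · exact h0
          have e2 : d / c * l / (d / c) = l := Nat.mul_div_cancel_left l hn0
          simp only [e1, e2]
        · -- right inverse
          rintro ⟨m, n⟩ hy
          simp only [Finset.mem_sigma, hMset, Finset.mem_filter, Finset.mem_Ioc,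
            Nat.mem_divisors] at hy
          obtain ⟨_, ⟨hnm, hm0⟩, _⟩ := hy
          have hn0 : 0 < n := by
            rcases Nat.eq_zero_or_pos n with h0 | h0
            · exfalso; exact hm0 (Nat.eq_zero_of_zero_dvd (h0 ▸ hnm))
            · exact h0
          have e1 : c * n / c = n := Nat.mul_div_cancel_left n (Nat.pos_of_ne_zero hc0)
          have e2 : n * (m / n) = m := Nat.mul_div_cancel' hnm
          simp only [e1, e2]
        · -- term equality
          rintro ⟨d, l⟩ hx
          simp only [Finset.mem_filter, Finset.mem_sigma, Finset.mem_Icc, Finset.mem_Ioc] at hx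
          obtain ⟨⟨⟨⟨hd1, _⟩, _, hdP, hδd⟩, _, _⟩, hsd, hsl⟩ := hx
          have hMd : M ∣ d := hdP ▸ Nat.gcd_dvd_left d P
          have hcd : c ∣ d := Nat.Coprime.mul_dvd_of_dvd_of_dvd hMδcop hMd hδd
          set n := d / c with hn
          have hdcn : d = c * n := (Nat.mul_div_cancel' hcd).symm
          have hd0 : d ≠ 0 := by omega
          have hccn : Nat.Coprime c n := Nat.coprime_of_squarefree_mul (hdcn ▸ hsd)
          have hn0 : 0 < n := by
            rcases Nat.eq_zero_or_pos n with h0 | h0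
            · exfalso; rw [h0, mul_zero] at hdcn; exact hd0 hdcn
            · exact h0
          have hle : n * l / n = l := Nat.mul_div_cancel_left l hn0
          have hμ : ArithmeticFunction.moebius d
              = ArithmeticFunction.moebius c * ArithmeticFunction.moebius n := by
            rw [hdcn]
            exact ArithmeticFunction.isMultiplicative_moebius.map_mul_of_coprime hccn
          have hh : h d = h c * h n := by rw [hdcn]; exact hmul c n hccn
          have hμl : ((ArithmeticFunction.moebius l : ℤ) : ℝ) ^ 2 = 1 := by
            rw [← Int.cast_pow, ArithmeticFunction.moebius_sq_eq_one_of_squarefree hsl,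
              Int.cast_one]
          show (ArithmeticFunction.moebius d : ℝ) * h d *
              ((ArithmeticFunction.moebius l : ℝ) ^ 2 * h l)
            = (ArithmeticFunction.moebius c : ℝ) * h c *
              ((ArithmeticFunction.moebius n : ℝ) * (h n * h (n * l / n)))
          rw [hle, hμ, hh, hμl]
          push_cast
          ring
      _ = ∑ m ∈ Mset, ∑ n ∈ m.divisors.filter (fun n => Nat.gcd n P = 1),
            (ArithmeticFunction.moebius c : ℝ) * h c *
              ((ArithmeticFunction.moebius n : ℝ) * (h n * h (m / n))) :=
        Finset.sum_sigma _ _ _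
      _ = ∑ m ∈ Mset, (ArithmeticFunction.moebius c : ℝ) * h c *
            (h m * ∑ n ∈ m.divisors.filter (fun n => Nat.gcd n P = 1),
              (ArithmeticFunction.moebius n : ℝ)) := by
        refine Finset.sum_congr rfl fun m hm => ?_
        simp only [hMset, Finset.mem_filter, Finset.mem_Ioc] at hm
        obtain ⟨_, hsm, _⟩ := hm
        rw [Finset.mul_sum, Finset.mul_sum]
        refine Finset.sum_congr rfl fun n hn => ?_
        simp only [Finset.mem_filter, Nat.mem_divisors] at hn
        obtain ⟨⟨hnm, hm0⟩, _⟩ := hn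
        have hmnl : m = n * (m / n) := (Nat.mul_div_cancel' hnm).symm
        have hcop : Nat.Coprime n (m / n) := Nat.coprime_of_squarefree_mul (hmnl ▸ hsm)
        have hhm : h m = h n * h (m / n) := by
          conv_lhs => rw [hmnl]
          exact hmul _ _ hcop
        rw [hhm]; ring
      _ = ∑ m ∈ Mset, (ArithmeticFunction.moebius c : ℝ) * h c *
            (h m * (if m ∣ P then 1 else 0)) := by
        refine Finset.sum_congr rfl fun m hm => ?_
        simp only [hMset, Finset.mem_filter, Finset.mem_Ioc] at hm
        obtain ⟨_, hsm, _⟩ := hm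
        have hm0 : m ≠ 0 := hsm.ne_zero
        have hgl : Nat.gcd m P ∣ m := Nat.gcd_dvd_left m P
        have hgr : Nat.gcd m P ∣ P := Nat.gcd_dvd_right m P
        have hmg : m = Nat.gcd m P * (m / Nat.gcd m P) := (Nat.mul_div_cancel' hgl).symm
        have hm'm : m / Nat.gcd m P ∣ m := Nat.div_dvd_of_dvd hgl
        have hset : m.divisors.filter (fun n => Nat.gcd n P = 1)
            = (m / Nat.gcd m P).divisors := by
          ext n
          simp only [Finset.mem_filter, Nat.mem_divisors]
          constructor
          · rintro ⟨⟨hnm, _⟩, hnP⟩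
            have hng : Nat.Coprime n (Nat.gcd m P) := Nat.Coprime.coprime_dvd_right hgr hnP
            refine ⟨Nat.Coprime.dvd_of_dvd_mul_left hng (hmg ▸ hnm), fun h0 => hm0 ?_⟩
            rw [hmg, h0, mul_zero]
          · rintro ⟨hnm', hm'0⟩
            have hcop : Nat.Coprime (Nat.gcd m P) (m / Nat.gcd m P) :=
              Nat.coprime_of_squarefree_mul (hmg ▸ hsm)
            have hcop' : Nat.gcd (Nat.gcd m P) (m / Nat.gcd m P) = 1 := hcop
            have hm'P : Nat.Coprime (m / Nat.gcd m P) P := by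
              apply coprime_of_no_common_prime
              intro p pp hp1 hp2
              have hpm : p ∣ m := hp1.trans hm'm
              have hpg : p ∣ Nat.gcd m P := Nat.dvd_gcd hpm hp2
              exact pp.ne_one (Nat.dvd_one.mp (hcop' ▸ Nat.dvd_gcd hpg hp1))
            exact ⟨⟨hnm'.trans hm'm, hm0⟩, Nat.Coprime.coprime_dvd_left hnm' hm'P⟩
        have hiff : m / Nat.gcd m P = 1 ↔ m ∣ P := by
          constructor
          · intro hone
            have : m = Nat.gcd m P := by
              conv_lhs => rw [hmg, hone, mul_one]
            exact this ▸ hgr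
          · intro hmP
            rw [Nat.gcd_eq_left hmP, Nat.div_self (Nat.pos_of_ne_zero hm0)]
        have hsum : ∑ n ∈ m.divisors.filter (fun n => Nat.gcd n P = 1),
            ((ArithmeticFunction.moebius n : ℤ) : ℝ) = if m ∣ P then 1 else 0 := by
          rw [hset, ← Int.cast_sum, sum_moebius_divisors]
          simp only [hiff]
          split <;> simp
        rw [hsum]
      _ = (ArithmeticFunction.moebius c : ℝ) * h c *
            ∑ m ∈ Mset.filter (fun m => m ∣ P), h m := by
        rw [Finset.mul_sum]
        have hsf : ∑ m ∈ Mset.filter (fun m => m ∣ P),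
              (ArithmeticFunction.moebius c : ℝ) * h c * h m
            = ∑ m ∈ Mset, if m ∣ P then (ArithmeticFunction.moebius c : ℝ) * h c * h m else 0 :=
          Finset.sum_filter _ _
        rw [hsf]
        refine Finset.sum_congr rfl fun m _ => ?_
        split_ifs <;> ring
  rw [sum_eq, abs_mul, abs_mul]
  have hμc_abs : |(ArithmeticFunction.moebius c : ℝ)| = 1 := by
    rw [← Int.cast_abs, ArithmeticFunction.abs_moebius_eq_one_of_squarefree hcsq, Int.cast_one]
  have hhc : 0 ≤ h c := hpos c hcsq
  have hSig_nonneg : 0 ≤ ∑ m ∈ Mset.filter (fun m => m ∣ P), h m := by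
    refine Finset.sum_nonneg fun m hm => ?_
    simp only [Finset.mem_filter] at hm
    exact hpos m (hP.squarefree_of_dvd hm.2)
  have hμc2 : (ArithmeticFunction.moebius c : ℝ) ^ 2 = 1 := by
    rw [← Int.cast_pow, ArithmeticFunction.moebius_sq_eq_one_of_squarefree hcsq, Int.cast_one]
  rw [hμc_abs, one_mul, abs_of_nonneg hhc, abs_of_nonneg hSig_nonneg, hμc2, one_mul]
  have hSig_le : ∑ m ∈ Mset.filter (fun m => m ∣ P), h m ≤ ∑ m ∈ P.divisors, h m := by
    refine Finset.sum_le_sum_of_subset_of_nonneg ?_ ?_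
    · intro m hm
      simp only [Finset.mem_filter] at hm
      exact Nat.mem_divisors.mpr ⟨hm.2, hP0⟩
    · intro m hm _
      exact hpos m (hP.squarefree_of_dvd (Nat.dvd_of_mem_divisors hm))
  calc h c * ∑ m ∈ Mset.filter (fun m => m ∣ P), h m
      ≤ h c * ∑ m ∈ P.divisors, h m := mul_le_mul_of_nonneg_left hSig_le hhc
    _ = h c * ∏ p ∈ P.primeFactors, (1 + h p) := by
        rw [sum_divisors_eq_prod h h1 hmul hP]

/-- There is an absolute constant `C > 0` such that for any `z ≥ 2`, any nonnegative
multiplicative `h`, squarefree `P, M, q, a, δ` with `(q,M) = 1`, `qM | P`,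
`(P,a) = (P,δ) = 1`, and `q = r_1 ⋯ r_s` a factorization into distinct primes
(`α_k = r_1⋯r_k`), for each `1 ≤ k ≤ s` the quantity
`R_k(M,δ) = ∑_{d ≤ z, (d,a)=1, (d,P)=M, δ|d} μ(d)h(d)
∑_{z/(dα_k) < l ≤ z/(dα_{k-1}), (l,dα_k a)=1} μ(l)² h(l)`
satisfies `|R_k(M,δ)| ≤ C μ(Mδ)² h(Mδ) ∏_{p|P}(1 + h(p))`. -/
theorem Rk_bound :
    ∃ C : ℝ, 0 < C ∧ ∀ z : ℝ, 2 ≤ z → ∀ h : ℕ → ℝ, h 1 = 1 →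
      (∀ m n : ℕ, Nat.Coprime m n → h (m * n) = h m * h n) →
      (∀ n : ℕ, Squarefree n → 0 ≤ h n) →
      ∀ P M q a δ : ℕ, Squarefree P → Squarefree M → Squarefree q → Squarefree a →
        Squarefree δ → Nat.Coprime q M → q * M ∣ P → Nat.Coprime P a → Nat.Coprime P δ →
      ∀ s : ℕ, ∀ r : ℕ → ℕ, (∀ i < s, (r i).Prime) →
        (∀ i < s, ∀ j < s, r i = r j → i = j) → q = ∏ i ∈ Finset.range s, r i →
      ∀ k : ℕ, 1 ≤ k → k ≤ s →
      |∑ d ∈ (Finset.Icc 1 ⌊z⌋₊).filter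
            (fun d => Nat.gcd d a = 1 ∧ Nat.gcd d P = M ∧ δ ∣ d),
          (ArithmeticFunction.moebius d : ℝ) * h d *
            ∑ l ∈ (Finset.Ioc ⌊z / ((d * ∏ i ∈ Finset.range k, r i : ℕ) : ℝ)⌋₊
                  ⌊z / ((d * ∏ i ∈ Finset.range (k - 1), r i : ℕ) : ℝ)⌋₊).filter
                (fun l => Nat.gcd l (d * (∏ i ∈ Finset.range k, r i) * a) = 1),
              (ArithmeticFunction.moebius l : ℝ) ^ 2 * h l| ≤
        C * (ArithmeticFunction.moebius (M * δ) : ℝ) ^ 2 * h (M * δ) *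
          ∏ p ∈ P.primeFactors, (1 + h p) := by
  refine ⟨1, one_pos, ?_⟩
  intro z hz h h1 hmul hpos P M q a δ hP hM hq ha hδ hqM hqMP hPa hPδ s r hrp hrinj hqr k hk1 hks
  rw [one_mul]
  by_cases hδa : Nat.Coprime δ a
  · have hMP : M ∣ P := (dvd_mul_left M q).trans hqMP
    have hqP : q ∣ P := (dvd_mul_right q M).trans hqMP
    have hAq : (∏ i ∈ Finset.range k, r i) ∣ q := by
      rw [hqr]
      exact Finset.prod_dvd_prod_of_subset _ _ _ (Finset.range_subset_range.mpr hks)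
    have hBA : (∏ i ∈ Finset.range (k - 1), r i) ∣ (∏ i ∈ Finset.range k, r i) :=
      Finset.prod_dvd_prod_of_subset _ _ _ (Finset.range_subset_range.mpr (Nat.sub_le k 1))
    exact Rk_aux z hz h h1 hmul hpos P M a δ _ _ hP hδ hMP hPa hPδ hδa hBA (hAq.trans hqP)
  · have hempty : (Finset.Icc 1 ⌊z⌋₊).filter
        (fun d => Nat.gcd d a = 1 ∧ Nat.gcd d P = M ∧ δ ∣ d) = ∅ := by
      rw [Finset.filter_eq_empty_iff]
      rintro d hd ⟨hda, hdP, hδd⟩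
      exact hδa (Nat.Coprime.coprime_dvd_left hδd hda)
    rw [hempty, Finset.sum_empty, abs_zero]
    have hMδcop : Nat.Coprime M δ :=
      Nat.Coprime.coprime_dvd_left ((dvd_mul_left M q).trans hqMP) hPδ
    have h2' : 0 ≤ h (M * δ) := hpos _ ((Nat.squarefree_mul hMδcop).mpr ⟨hM, hδ⟩)
    have h3' : (0 : ℝ) ≤ ∏ p ∈ P.primeFactors, (1 + h p) := by
      refine Finset.prod_nonneg fun p hp => ?_
      linarith [hpos p (Nat.prime_of_mem_primeFactors hp).squarefree]
    exact mul_nonneg (mul_nonneg (sq_nonneg _) h2') h3'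
end

section
/- For every integer d ≥ 1 and every complex s with Re s > 1, the series ∑_{n ≥ 1, gcd(n,d)=1} 1/(τ(n)·n^s) converges absolutely and equals the convergent product ∏_{p ∤ d, p prime} p^s·log(p^s/(p^s−1)), where log denotes the principal branch of the complex logarithm. -/
open Complex

lemma aux_hasSum {y : ℂ} (hy : 1 < ‖y‖) :
    HasSum (fun e : ℕ => 1 / (((e + 1 : ℕ) : ℂ) * y ^ e))
      (y * Complex.log (y / (y - 1))) := by
  have hy0 : y ≠ 0 := by
    intro h; rw [h, norm_zero] at hy; linarith
  set x : ℂ := y⁻¹ with hxdef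
  have hx : ‖x‖ < 1 := by
    rw [hxdef, norm_inv, inv_lt_one_iff₀]
    right; exact hy
  have hx0 : x ≠ 0 := inv_ne_zero hy0
  have h1 := hasSum_taylorSeries_neg_log hx
  have h2 : HasSum (fun n : ℕ => x ^ (n + 1) / ((n + 1 : ℕ) : ℂ)) (-Complex.log (1 - x)) := by
    rw [hasSum_nat_add_iff (f := fun n : ℕ => x ^ n / n) 1]
    simpa using h1
  have h3 := h2.mul_left x⁻¹
  have harg : (1 - x).arg ≠ Real.pi := by
    have hre : 0 < (1 - x).re := by
      have h : |x.re| ≤ ‖x‖ := abs_re_le_norm x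
      have h2 := abs_le.mp h
      simp only [sub_re, one_re]
      linarith
    intro h
    have := Complex.arg_eq_pi_iff.mp h
    linarith [this.1]
  have hval : x⁻¹ * -Complex.log (1 - x) = y * Complex.log (y / (y - 1)) := by
    have h1x : 1 - x = (y - 1) / y := by
      field_simp [hxdef]
      rw [hxdef, sub_mul, inv_mul_cancel₀ hy0]; ring
    have : Complex.log (y / (y - 1)) = -Complex.log (1 - x) := by
      rw [h1x, ← Complex.log_inv _ (by rwa [← h1x]), inv_div]
    rw [this, hxdef, inv_inv]
  rw [hval] at h3
  refine h3.congr_fun fun n => ?_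
  push_cast
  rw [pow_succ]
  field_simp [hxdef]
  have hn1 : ((n : ℂ) + 1) ≠ 0 := Nat.cast_add_one_ne_zero n
  rw [hxdef, inv_pow, mul_inv_cancel₀ (pow_ne_zero _ hy0)]

lemma aux_norm_gt {p : ℕ} (hp : p.Prime) {s : ℂ} (hs : 1 < s.re) : 1 < ‖(p : ℂ) ^ s‖ := by
  rw [Complex.norm_natCast_cpow_of_pos hp.pos,
    Real.one_lt_rpow_iff_of_pos (by exact_mod_cast hp.pos)]
  exact Or.inl ⟨by exact_mod_cast hp.one_lt, by linarith⟩

/-- For `d ≥ 1` and `Re s > 1`, the series `∑_{n ≥ 1, (n,d)=1} 1/(τ(n) n^s)` converges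
absolutely and equals the convergent product `∏_{p ∤ d} p^s log(p^s/(p^s-1))` over primes
not dividing `d` (principal branch of the complex logarithm). -/
theorem euler_product_inv_tau (d : ℕ) (hd : 1 ≤ d) (s : ℂ) (hs : 1 < s.re) :
    Summable (fun n : {n : ℕ // 0 < n ∧ Nat.gcd n d = 1} =>
      ‖(1 : ℂ) / (((n : ℕ).divisors.card : ℂ) * ((n : ℕ) : ℂ) ^ s)‖) ∧
    Multipliable (fun p : {p : ℕ // p.Prime ∧ ¬p ∣ d} =>
      ((p : ℕ) : ℂ) ^ s * Complex.log (((p : ℕ) : ℂ) ^ s / (((p : ℕ) : ℂ) ^ s - 1))) ∧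
    ∑' n : {n : ℕ // 0 < n ∧ Nat.gcd n d = 1},
        (1 : ℂ) / (((n : ℕ).divisors.card : ℂ) * ((n : ℕ) : ℂ) ^ s) =
      ∏' p : {p : ℕ // p.Prime ∧ ¬p ∣ d},
        ((p : ℕ) : ℂ) ^ s * Complex.log (((p : ℕ) : ℂ) ^ s / (((p : ℕ) : ℂ) ^ s - 1)) := by
  classical
  set g : ℕ → ℂ := fun n => 1 / ((n.divisors.card : ℂ) * (n : ℂ) ^ s) with hgdef
  set f : ℕ → ℂ := fun n => if Nat.gcd n d = 1 then g n else 0 with hfdef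
  have hg0 : g 0 = 0 := by simp [hgdef]
  have hf₀ : f 0 = 0 := by simp [hfdef, hg0]
  have hf₁ : f 1 = 1 := by simp [hfdef, hgdef]
  have hmul : ∀ {m n : ℕ}, Nat.Coprime m n → f (m * n) = f m * f n := by
    intro m n hmn
    by_cases h : Nat.gcd (m * n) d = 1
    · have hm := (Nat.coprime_mul_iff_left.mp h).1
      have hn := (Nat.coprime_mul_iff_left.mp h).2
      simp only [hfdef, if_pos h, if_pos hm, if_pos hn, hgdef]
      rw [hmn.card_divisors_mul]
      push_cast
      rw [Complex.natCast_mul_natCast_cpow, div_mul_div_comm, one_mul]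
      ring_nf
    · simp only [hfdef, if_neg h]
      by_cases hm : Nat.gcd m d = 1
      · have hn : ¬ Nat.gcd n d = 1 := fun hn => h (Nat.Coprime.mul hm hn)
        rw [if_neg hn, mul_zero]
      · rw [if_neg hm, zero_mul]
  have hsum : Summable (fun n => ‖f n‖) := by
    have hb : Summable (fun n : ℕ => ‖1 / (n : ℂ) ^ s‖) :=
      summable_norm_iff.mpr (Complex.summable_one_div_nat_cpow.mpr hs)
    refine hb.of_nonneg_of_le (fun _ => norm_nonneg _) fun n => ?_
    simp only [hfdef, hgdef]
    split
    · rcases Nat.eq_zero_or_pos n with rfl | hn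
      · simp
      · have hns : (n : ℂ) ^ s ≠ 0 := by
          simp [Complex.cpow_eq_zero_iff, hn.ne']
        have h1 : (1 : ℝ) ≤ ‖((n.divisors.card : ℕ) : ℂ)‖ := by
          rw [Complex.norm_natCast]
          exact_mod_cast Finset.card_pos.mpr ⟨1, Nat.one_mem_divisors.mpr hn.ne'⟩
        rw [norm_div, norm_div, norm_mul, norm_one]
        exact one_div_le_one_div_of_le (norm_pos_iff.mpr hns)
          (le_mul_of_one_le_left (norm_nonneg _) h1)
    · rw [norm_zero]; positivity
  have hprod := EulerProduct.eulerProduct_hasProd_mulIndicator hf₁ hmul hsum hf₀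
  set G : ℕ → ℂ := fun p => (p : ℂ) ^ s * Complex.log ((p : ℂ) ^ s / ((p : ℂ) ^ s - 1)) with hGdef
  have hind : (Set.mulIndicator {p | Nat.Prime p} fun p => ∑' e, f (p ^ e))
      = Set.mulIndicator {p : ℕ | p.Prime ∧ ¬p ∣ d} G := by
    funext p
    by_cases hp : p.Prime
    · by_cases hpd : p ∣ d
      · rw [Set.mulIndicator_of_mem (by exact hp), Set.mulIndicator_of_notMem
          (by exact fun h => h.2 hpd)]
        have hz : ∀ e : ℕ, e ≠ 0 → f (p ^ e) = 0 := by
          intro e he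
          have hng : ¬ Nat.gcd (p ^ e) d = 1 := by
            intro hgcd
            have hpg : p ∣ Nat.gcd (p ^ e) d := Nat.dvd_gcd (dvd_pow_self p he) hpd
            rw [hgcd] at hpg
            exact hp.one_lt.ne' (Nat.dvd_one.mp hpg)
          simp [hfdef, hng]
        rw [tsum_eq_single 0 (fun e he => hz e he)]
        simpa using hf₁
      · rw [Set.mulIndicator_of_mem (by exact hp), Set.mulIndicator_of_mem
          (by exact ⟨hp, hpd⟩)]
        have hcop : Nat.Coprime p d := (Nat.Prime.coprime_iff_not_dvd hp).mpr hpd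
        have hterm : ∀ e : ℕ, f (p ^ e) = 1 / (((e + 1 : ℕ) : ℂ) * ((p : ℂ) ^ s) ^ e) := by
          intro e
          have hg1 : Nat.gcd (p ^ e) d = 1 := Nat.Coprime.pow_left e hcop
          have hcard : (p ^ e).divisors.card = e + 1 := by
            rw [Nat.divisors_prime_pow hp, Finset.card_map, Finset.card_range]
          have hcpow : ((p ^ e : ℕ) : ℂ) ^ s = ((p : ℂ) ^ s) ^ e := by
            rw [Nat.cast_pow, ← Complex.cpow_nat_mul' (x := (p : ℂ)) (n := e)
              (by rw [Complex.natCast_arg]; simpa using Real.pi_pos)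
              (by rw [Complex.natCast_arg]; simpa using Real.pi_pos.le) s,
              Complex.cpow_nat_mul]
          simp only [hfdef, if_pos hg1, hgdef, hcard, hcpow]
        rw [tsum_congr hterm, (aux_hasSum (aux_norm_gt hp hs)).tsum_eq]
    · rw [Set.mulIndicator_of_notMem (by exact hp),
        Set.mulIndicator_of_notMem (by exact fun h => hp h.1)]
  rw [hind] at hprod
  have hprodsub : HasProd (fun p : {p : ℕ // p.Prime ∧ ¬p ∣ d} => G ↑p) (∑' n, f n) := by
    rw [show (fun p : {p : ℕ // p.Prime ∧ ¬p ∣ d} => G ↑p)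
      = (G ∘ ((↑) : {p : ℕ | p.Prime ∧ ¬p ∣ d} → ℕ)) from rfl,
      ]
    exact hasProd_subtype_iff_mulIndicator.mpr hprod
  have hGeq : (fun p : {p : ℕ // p.Prime ∧ ¬p ∣ d} =>
      ((p : ℕ) : ℂ) ^ s * Complex.log (((p : ℕ) : ℂ) ^ s / (((p : ℕ) : ℂ) ^ s - 1)))
      = fun p : {p : ℕ // p.Prime ∧ ¬p ∣ d} => G ↑p := rfl
  refine ⟨?_, ?_, ?_⟩
  · have hres := hsum.subtype {n : ℕ | 0 < n ∧ Nat.gcd n d = 1}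
    refine Summable.congr hres fun n => ?_
    have := n.2.2
    simp [hfdef, this, hgdef]
  · rw [hGeq]; exact hprodsub.multipliable
  · have hsupp : Function.support f ⊆ {n : ℕ | 0 < n ∧ Nat.gcd n d = 1} := by
      intro n hn
      constructor
      · rcases Nat.eq_zero_or_pos n with rfl | h
        · exact absurd hf₀ hn
        · exact h
      · by_contra h
        exact hn (by simp [hfdef, h])
    have h1 : ∑' n : {n : ℕ // 0 < n ∧ Nat.gcd n d = 1},
        (1 : ℂ) / (((n : ℕ).divisors.card : ℂ) * ((n : ℕ) : ℂ) ^ s)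
        = ∑' n : {n : ℕ // 0 < n ∧ Nat.gcd n d = 1}, f ↑n := by
      refine tsum_congr fun n => ?_
      have := n.2.2
      simp [hfdef, this, hgdef]
    rw [h1, hGeq, hprodsub.tprod_eq]
    exact tsum_subtype_eq_of_support_subset hsupp
end

section
/- Define coefficients d_k by the power series expansion −x/((1−x)·ln(1−x)) = ∑_{k=0}^∞ d_k x^k, valid for |x| < 1, and coefficients c_k by x/(−ln(1−x)) = ∑_{k=0}^∞ c_k x^k for |x| < 1. Then d_0 = 1, d_1 = 1/2, for every k ≥ 1 one has d_k = c_0 + c_1 + ⋯ + c_k, and |d_k| ≤ 2 for every k ≥ 1. -/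
open Finset

open scoped ENNReal NNReal

/-- Uniqueness: if a real power series sums to zero on (-1,1), all coefficients vanish. -/
lemma coeff_eq_zero_of_hasSum_zero (a : ℕ → ℝ)
    (h : ∀ x : ℝ, |x| < 1 → HasSum (fun n => a n * x ^ n) 0) : ∀ n, a n = 0 := by
  set p := FormalMultilinearSeries.ofScalars ℝ a with hp
  have hrad : (2⁻¹ : NNReal) ≤ p.radius := by
    apply p.le_radius_of_tendsto (l := 0)
    have hs : HasSum (fun n => a n * (2⁻¹ : ℝ) ^ n) 0 := h _ (by rw [abs_of_pos] <;> norm_num)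
    have := hs.summable.tendsto_atTop_zero
    have h2 : (fun n => ‖p n‖ * ((2⁻¹ : NNReal) : ℝ) ^ n) = fun n => |a n * (2⁻¹:ℝ) ^ n| := by
      funext n
      rw [hp, FormalMultilinearSeries.ofScalars_norm]
      simp [abs_mul, Real.norm_eq_abs, abs_of_pos]
    rw [h2]
    simpa using this.abs
  have hball : HasFPowerSeriesOnBall (0 : ℝ → ℝ) p 0 2⁻¹ := by
    refine ⟨by exact_mod_cast hrad, by norm_num, ?_⟩
    intro y hy
    rw [EMetric.mem_ball, edist_zero_right] at hy
    have hy1 : |y| < 1 := by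
      have h2 : ‖y‖₊ < (2⁻¹ : ℝ≥0) := by
        rw [← ENNReal.coe_lt_coe]
        calc ((‖y‖₊ : ℝ≥0) : ℝ≥0∞) < 2⁻¹ := hy
        _ = ((2⁻¹ : ℝ≥0) : ℝ≥0∞) := by simp
      have h3 : ‖y‖ < ((2⁻¹ : ℝ≥0) : ℝ) := h2
      rw [Real.norm_eq_abs] at h3
      have : ((2⁻¹ : ℝ≥0) : ℝ) = 2⁻¹ := by norm_num
      rw [this] at h3; linarith
    have := h y hy1
    simp only [Pi.zero_apply]
    convert this using 1
    · exact rfl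
    funext n
    rw [hp, FormalMultilinearSeries.ofScalars_apply_eq]
    simp [smul_eq_mul]
  have hat : HasFPowerSeriesAt (0 : ℝ → ℝ) p 0 := ⟨2⁻¹, hball⟩
  intro n
  have := hat.apply_eq_zero n 1
  rw [hp, FormalMultilinearSeries.ofScalars_apply_eq] at this
  simpa using this

/-- Coefficient extensionality. -/
lemma coeff_ext (a b : ℕ → ℝ) (f : ℝ → ℝ)
    (ha : ∀ x : ℝ, |x| < 1 → HasSum (fun n => a n * x ^ n) (f x))
    (hb : ∀ x : ℝ, |x| < 1 → HasSum (fun n => b n * x ^ n) (f x)) : ∀ n, a n = b n := by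
  have h : ∀ x : ℝ, |x| < 1 → HasSum (fun n => (a n - b n) * x ^ n) 0 := by
    intro x hx
    have := (ha x hx).sub (hb x hx)
    simpa [sub_mul] using this
  intro n
  have := coeff_eq_zero_of_hasSum_zero _ h n
  linarith

/-- Absolute summability inside the disc. -/
lemma abs_summable_of_hasSum (a : ℕ → ℝ) (f : ℝ → ℝ)
    (h : ∀ x : ℝ, |x| < 1 → HasSum (fun n => a n * x ^ n) (f x))
    {x : ℝ} (hx : |x| < 1) : Summable fun n => ‖a n * x ^ n‖ := by
  have hx0 : 0 ≤ |x| := abs_nonneg x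
  obtain ⟨r, hxr, hr1⟩ : ∃ r : ℝ, |x| < r ∧ r < 1 := ⟨(|x| + 1) / 2, by linarith, by linarith⟩
  have hr0 : 0 < r := lt_of_le_of_lt hx0 hxr
  have hs : HasSum (fun n => a n * r ^ n) (f r) := h r (by rwa [abs_of_pos hr0])
  have hb : BddAbove (Set.range fun n => |a n * r ^ n|) :=
    (hs.summable.tendsto_atTop_zero.abs.bddAbove_range)
  obtain ⟨C, hC⟩ := hb
  have key : ∀ n, ‖a n * x ^ n‖ ≤ C * (|x| / r) ^ n := by
    intro n
    have h1 : |a n * r ^ n| ≤ C := hC (Set.mem_range_self n)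
    rw [abs_mul, abs_pow, abs_of_pos hr0] at h1
    rw [Real.norm_eq_abs, abs_mul, abs_pow]
    have he : |a n| * |x| ^ n = (|a n| * r ^ n) * (|x| / r) ^ n := by
      rw [div_pow, mul_assoc, mul_div_cancel₀ _ (pow_ne_zero _ hr0.ne')]
    rw [he]
    exact mul_le_mul_of_nonneg_right h1 (by positivity)
  refine Summable.of_nonneg_of_le (fun n => norm_nonneg _) key ?_
  exact (summable_geometric_of_lt_one (by positivity)
    (by rw [div_lt_one hr0]; exact hxr)).mul_left C

/-- The auxiliary coefficient sequence of `-(1-x) log(1-x) / x`. -/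
noncomputable def auxA : ℕ → ℝ := fun n => if n = 0 then 1 else -(1 / (n * (n + 1)))

lemma auxA_hasSum : ∀ x : ℝ, |x| < 1 →
    HasSum (fun n => auxA n * x ^ n)
      (if x = 0 then 1 else -((1 - x) * Real.log (1 - x)) / x) := by
  intro x hx
  rcases eq_or_ne x 0 with rfl | hx0
  · simp only [if_pos rfl]
    have : HasSum (fun n : ℕ => auxA n * (0:ℝ) ^ n) (auxA 0 * (0:ℝ) ^ 0) := by
      apply hasSum_single
      intro b hb
      simp [zero_pow hb]
    simpa [auxA] using this
  · rw [if_neg hx0]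
    have L : HasSum (fun n : ℕ => x ^ (n + 1) / (n + 1)) (-Real.log (1 - x)) :=
      Real.hasSum_pow_div_log_of_abs_lt_one hx
    have L1 : HasSum (fun n : ℕ => x ^ n / (n + 1)) (x⁻¹ * -Real.log (1 - x)) := by
      have := L.mul_left x⁻¹
      convert this using 1
      · exact rfl
      funext n
      rw [pow_succ']
      field_simp
    set t : ℕ → ℝ := fun n => if n = 0 then 0 else x ^ n / n with ht
    have L2 : HasSum t (-Real.log (1 - x)) := by
      have hshift : HasSum (fun n : ℕ => t (n + 1)) (-Real.log (1 - x)) := by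
        convert L using 1
        funext n
        simp [ht]
      have := (hasSum_nat_add_iff 1).mp hshift
      simpa [ht] using this
    have L3 := L1.sub L2
    have hterm : (fun n : ℕ => x ^ n / (n + 1) - t n) = fun n => auxA n * x ^ n := by
      funext n
      rcases eq_or_ne n 0 with rfl | hn
      · simp [ht, auxA]
      · have hn0 : (n : ℝ) ≠ 0 := Nat.cast_ne_zero.mpr hn
        have hn1 : (n : ℝ) + 1 ≠ 0 := by positivity
        simp only [ht, auxA, if_neg hn]
        field_simp
        ring
    rw [hterm] at L3
    convert L3 using 1
    · exact rfl
    have hlog : Real.log (1 - x) = Real.log (1 - x) := rfl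
    field_simp
    ring

noncomputable def auxW : ℕ → ℝ := fun j => 1 / (j * (j + 1))

lemma auxW_nonneg (j : ℕ) : 0 ≤ auxW j := by
  unfold auxW; positivity

lemma auxW_sum (n : ℕ) : ∑ j ∈ range n, auxW (j + 1) = 1 - 1 / (n + 1) := by
  have key : ∀ j : ℕ, auxW (j + 1) = (fun i : ℕ => -(1 / ((i : ℝ) + 1))) (j + 1)
      - (fun i : ℕ => -(1 / ((i : ℝ) + 1))) j := by
    intro j
    have h1 : ((j : ℝ) + 1) ≠ 0 := by positivity
    have h2 : ((j : ℝ) + 1 + 1) ≠ 0 := by positivity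
    simp only [auxW]
    push_cast
    field_simp
    ring
  rw [Finset.sum_congr rfl (fun j _ => key j),
    Finset.sum_range_sub (fun i : ℕ => -(1 / ((i : ℝ) + 1)))]
  simp
  ring

/-- Let `d_k` be the Taylor coefficients at `0` of `x ↦ -x/((1-x) ln(1-x))` and `c_k` those
of `x ↦ x/(-ln(1-x))` (both with value `1` at `x = 0`). Then `d_0 = 1`, `d_1 = 1/2`,
`d_k = c_0 + c_1 + ⋯ + c_k` for `k ≥ 1`, and `|d_k| ≤ 2` for `k ≥ 1`. -/
theorem dk_coefficients (c d : ℕ → ℝ)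
    (hc : ∀ x : ℝ, |x| < 1 →
      HasSum (fun k : ℕ => c k * x ^ k)
        (if x = 0 then 1 else x / (-Real.log (1 - x))))
    (hd : ∀ x : ℝ, |x| < 1 →
      HasSum (fun k : ℕ => d k * x ^ k)
        (if x = 0 then 1 else -x / ((1 - x) * Real.log (1 - x)))) :
    d 0 = 1 ∧ d 1 = 1 / 2 ∧
      (∀ k : ℕ, 1 ≤ k → d k = ∑ i ∈ Finset.range (k + 1), c i) ∧
      ∀ k : ℕ, 1 ≤ k → |d k| ≤ 2 := by
  -- d 0 = 1
  have hd0 : d 0 = 1 := by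
    have h0 := hd 0 (by norm_num)
    rw [if_pos rfl] at h0
    have h0' : HasSum (fun k : ℕ => d k * (0:ℝ) ^ k) (d 0) := by
      have := hasSum_single (f := fun k : ℕ => d k * (0:ℝ) ^ k) 0
        (fun b hb => by simp [zero_pow hb])
      simpa using this
    exact h0'.unique h0
  -- Cauchy product: coefficients of f_d · auxA are those of the constant 1
  have hE : ∀ n : ℕ, (∑ k ∈ range (n + 1), d k * auxA (n - k))
      = (if n = 0 then (1:ℝ) else 0) := by
    apply coeff_ext _ _ (fun _ : ℝ => (1:ℝ))
    · intro x hx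
      have hnd : Summable fun n => ‖d n * x ^ n‖ :=
        abs_summable_of_hasSum d
          (fun x => if x = 0 then 1 else -x / ((1 - x) * Real.log (1 - x))) hd hx
      have hnA : Summable fun n => ‖auxA n * x ^ n‖ :=
        abs_summable_of_hasSum auxA
          (fun x => if x = 0 then 1 else -((1 - x) * Real.log (1 - x)) / x) auxA_hasSum hx
      have hcauchy := hasSum_sum_range_mul_of_summable_norm hnd hnA
      rw [(hd x hx).tsum_eq, (auxA_hasSum x hx).tsum_eq] at hcauchy
      have hprod : (if x = 0 then (1:ℝ) else -x / ((1 - x) * Real.log (1 - x))) *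
          (if x = 0 then 1 else -((1 - x) * Real.log (1 - x)) / x) = 1 := by
        rcases eq_or_ne x 0 with rfl | hx0
        · simp
        · rw [if_neg hx0, if_neg hx0]
          have h1x : (1 : ℝ) - x ≠ 0 := by
            intro h
            have : x = 1 := by linarith
            rw [this] at hx
            simp at hx
          have hlog : Real.log (1 - x) ≠ 0 := by
            intro h
            have h1 : (1 : ℝ) - x = 1 := by
              have hpos : (0:ℝ) < 1 - x := by
                rcases abs_lt.mp hx with ⟨h2, h3⟩; linarith
              have := Real.exp_log hpos
              rw [h] at this
              simpa [Real.exp_zero] using this.symm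
            apply hx0
            linarith
          field_simp
      rw [hprod] at hcauchy
      have hterm : (fun n : ℕ => ∑ k ∈ range (n + 1), d k * x ^ k * (auxA (n - k) * x ^ (n - k)))
          = fun n : ℕ => (∑ k ∈ range (n + 1), d k * auxA (n - k)) * x ^ n := by
        funext n
        rw [Finset.sum_mul]
        apply Finset.sum_congr rfl
        intro k hk
        have hkn : k ≤ n := Nat.lt_succ_iff.mp (Finset.mem_range.mp hk)
        have : x ^ k * x ^ (n - k) = x ^ n := by
          rw [← pow_add, Nat.add_sub_cancel' hkn]
        calc d k * x ^ k * (auxA (n - k) * x ^ (n - k))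
            = d k * auxA (n - k) * (x ^ k * x ^ (n - k)) := by ring
          _ = d k * auxA (n - k) * x ^ n := by rw [this]
      rw [hterm] at hcauchy
      exact hcauchy
    · intro x hx
      have : HasSum (fun n : ℕ => (if n = 0 then (1:ℝ) else 0) * x ^ n)
          ((if (0:ℕ) = 0 then (1:ℝ) else 0) * x ^ 0) := by
        apply hasSum_single
        intro b hb
        simp [hb]
      simpa using this
  -- The recurrence d n = ∑_{k<n} d k * auxW (n-k) for n ≥ 1
  have hrec : ∀ n : ℕ, 1 ≤ n → d n = ∑ k ∈ range n, d k * auxW (n - k) := by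
    intro n hn
    have h := hE n
    rw [if_neg (by omega), Finset.sum_range_succ] at h
    have hA0 : auxA (n - n) = 1 := by simp [auxA]
    rw [hA0, mul_one] at h
    have hconv : ∀ k ∈ range n, d k * auxA (n - k) = -(d k * auxW (n - k)) := by
      intro k hk
      have hk' : k < n := Finset.mem_range.mp hk
      have hnk : n - k ≠ 0 := by omega
      simp only [auxA, auxW, if_neg hnk]
      ring
    rw [Finset.sum_congr rfl hconv, Finset.sum_neg_distrib] at h
    linarith
  -- Bounds: 0 ≤ d n ≤ 1 for all n
  have hbound : ∀ n : ℕ, 0 ≤ d n ∧ d n ≤ 1 := by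
    intro n
    induction n using Nat.strong_induction_on with
    | _ n ih =>
      rcases Nat.eq_zero_or_pos n with rfl | hn
      · constructor <;> rw [hd0] <;> norm_num
      · have hr := hrec n hn
        constructor
        · rw [hr]
          apply Finset.sum_nonneg
          intro k hk
          exact mul_nonneg (ih k (Finset.mem_range.mp hk)).1 (auxW_nonneg _)
        · rw [hr]
          have hle : ∑ k ∈ range n, d k * auxW (n - k) ≤ ∑ k ∈ range n, auxW (n - k) := by
            apply Finset.sum_le_sum
            intro k hk
            have := (ih k (Finset.mem_range.mp hk)).2
            nlinarith [auxW_nonneg (n - k), (ih k (Finset.mem_range.mp hk)).1]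
          have hrefl : ∑ k ∈ range n, auxW (n - k) = ∑ j ∈ range n, auxW (j + 1) := by
            rw [← Finset.sum_range_reflect]
            apply Finset.sum_congr rfl
            intro j hj
            have hj' : j < n := Finset.mem_range.mp hj
            congr 1
            omega
          have h1n : (0:ℝ) < 1 / ((n:ℝ) + 1) := by positivity
          calc ∑ k ∈ range n, d k * auxW (n - k) ≤ ∑ k ∈ range n, auxW (n - k) := hle
            _ = 1 - 1 / ((n:ℝ) + 1) := by rw [hrefl, auxW_sum]
            _ ≤ 1 := by linarith
  -- d 1 = 1/2
  have hd1 : d 1 = 1 / 2 := by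
    have := hrec 1 le_rfl
    simp [auxW, hd0] at this
    rw [this]; norm_num
  -- c relation: c n = d n - d (n-1) for n ≥ 1, c 0 = d 0
  have hce : ∀ n : ℕ, c n = (if n = 0 then d 0 else d n - d (n - 1)) := by
    apply coeff_ext _ _
      (fun x : ℝ => if x = 0 then 1 else x / (-Real.log (1 - x)))
    · exact hc
    · intro x hx
      have hS := hd x hx
      set S := (if x = 0 then (1:ℝ) else -x / ((1 - x) * Real.log (1 - x))) with hSdef
      set t : ℕ → ℝ := fun n => if n = 0 then 0 else d (n - 1) * x ^ n with htdef
      have hts : HasSum t (x * S) := by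
        have hshift : HasSum (fun n : ℕ => t (n + 1)) (x * S) := by
          have := hS.mul_left x
          convert this using 1
          · exact rfl
          funext n
          simp only [htdef]
          rw [if_neg (Nat.succ_ne_zero n), Nat.add_sub_cancel, pow_succ]
          ring
        have := (hasSum_nat_add_iff 1).mp hshift
        simpa [htdef] using this
      have hsub := hS.sub hts
      have hterm : (fun n : ℕ => d n * x ^ n - t n)
          = fun n : ℕ => (if n = 0 then d 0 else d n - d (n - 1)) * x ^ n := by
        funext n
        rcases eq_or_ne n 0 with rfl | hn
        · simp [htdef]
        · simp only [htdef, if_neg hn]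
          ring
      rw [hterm] at hsub
      have hval : S - x * S = (if x = 0 then 1 else x / (-Real.log (1 - x))) := by
        rcases eq_or_ne x 0 with rfl | hx0
        · simp [hSdef]
        · rw [hSdef, if_neg hx0, if_neg hx0]
          have h1x : (1 : ℝ) - x ≠ 0 := by
            intro h
            have : x = 1 := by linarith
            rw [this] at hx; simp at hx
          have hlog : Real.log (1 - x) ≠ 0 := by
            intro h
            have hpos : (0:ℝ) < 1 - x := by
              rcases abs_lt.mp hx with ⟨h2, h3⟩; linarith
            have := Real.exp_log hpos
            rw [h] at this
            apply hx0
            have : (1:ℝ) - x = 1 := by simpa [Real.exp_zero] using this.symm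
            linarith
          have h1 : -x / ((1 - x) * Real.log (1 - x)) - x * (-x / ((1 - x) * Real.log (1 - x)))
              = (1 - x) * (-x / ((1 - x) * Real.log (1 - x))) := by ring
          rw [h1]
          rw [div_neg, ← neg_div]
          field_simp
      rw [hval] at hsub
      exact hsub
  -- partial sums of c telescope to d
  have hsumc : ∀ k : ℕ, ∑ i ∈ Finset.range (k + 1), c i = d k := by
    intro k
    induction k with
    | zero => simp [hce 0]
    | succ k ih =>
      rw [Finset.sum_range_succ, ih, hce (k + 1)]
      simp
  refine ⟨hd0, hd1, fun k _ => (hsumc k).symm, fun k _ => ?_⟩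
  rcases hbound k with ⟨h1, h2⟩
  rw [abs_of_nonneg h1]
  linarith
end
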